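/- arXiv:1406.7017 — 7 statements merged into one kernel-verified Lean document; each statement's English description precedes it below -/
import Mathlib

section
/- Let k ≥ 2, r ≥ 1 and M ≥ 1 be integers and set n = k·M^r. For 0 ≤ i ≤ r let m_i = M^i, let w_i be the word (1^{m_i} 2^{m_i} ⋯ k^{m_i})^{n/(k·m_i)} of length n over the alphabet [k], and let rev(w_r) be the reversal of w_r. Then for the family W = {w_0, w_1, …, w_r, rev(w_r), 1^n, 2^n, …, k^n} of k+r+2 words, every two distinct words of W have longest common subsequence of length at most n/k + k·M^{r−1} (that is, at most n/k + k^{1/r}·n^{1−1/r}). -/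
/-- The word `(1^m 2^m ⋯ k^m)^q` over the alphabet `Fin k` (letters `0,…,k-1` standing for
`1,…,k`): `q` concatenated copies of the block `1^m 2^m ⋯ k^m`. -/
def periodicWord (k m q : ℕ) : List (Fin k) :=
  (List.replicate q ((List.finRange k).flatMap fun a => List.replicate m a)).flatten

namespace LCSAux

open scoped List

variable {α : Type*}

/-- flatMap of a run list. -/
def fm (L : List (α × ℕ)) : List α := L.flatMap fun p => List.replicate p.2 p.1

@[simp] lemma fm_nil : fm ([] : List (α × ℕ)) = [] := rfl
@[simp] lemma fm_cons (p : α × ℕ) (L : List (α × ℕ)) :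
    fm (p :: L) = List.replicate p.2 p.1 ++ fm L := rfl
lemma fm_append (L₁ L₂ : List (α × ℕ)) : fm (L₁ ++ L₂) = fm L₁ ++ fm L₂ := by
  simp [fm]

lemma fm_length (L : List (α × ℕ)) : (fm L).length = (L.map Prod.snd).sum := by
  induction L with
  | nil => rfl
  | cons p L ih => simp [fm_cons, ih]

/-- normalized run list -/
def Norm (L : List (α × ℕ)) : Prop :=
  (∀ p ∈ L, 0 < p.2) ∧ L.Chain' (fun p q => p.1 ≠ q.1)

lemma norm_nil : Norm ([] : List (α × ℕ)) := ⟨by simp, List.isChain_nil⟩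

/-- splitting a run-list factorization at a cut of the word -/
lemma cut (L : List (α × ℕ)) (hL : L ≠ []) (x y : List α) (h : fm L = x ++ y) :
    ∃ (L₁ L₂ : List (α × ℕ)) (a : α) (c₁ c₂ : ℕ),
      L = L₁ ++ (a, c₁ + c₂) :: L₂ ∧ x = fm L₁ ++ List.replicate c₁ a ∧
      y = List.replicate c₂ a ++ fm L₂ := by
  induction L generalizing x with
  | nil => exact absurd rfl hL
  | cons p L' ih =>
    obtain ⟨b, c⟩ := p
    by_cases hx : x.length ≤ c
    · refine ⟨[], L', b, x.length, c - x.length, by simp [Nat.add_sub_cancel' hx], ?_, ?_⟩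
      · -- x is a prefix of replicate c b ++ fm L'
        have hpre : x <+: fm ((b, c) :: L') := ⟨y, h.symm⟩
        have : x = (fm ((b, c) :: L')).take x.length := by
          rw [List.prefix_iff_eq_take] at hpre; exact hpre
        rw [this]
        simp only [fm_cons]
        rw [List.take_append_of_le_length (by simpa using hx), List.take_replicate]
        simp [Nat.min_eq_left hx]
      · -- y = drop
        have : y = (fm ((b, c) :: L')).drop x.length := by
          rw [h]; simp
        rw [this]
        simp only [fm_cons]
        rw [List.drop_append_of_le_length (by simpa using hx), List.drop_replicate]
    · push_neg at hx
      have hL' : L' ≠ [] := by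
        rintro rfl
        have := congrArg List.length h
        simp at this
        omega
      -- x = replicate c b ++ x', fm L' = x' ++ y
      have hxc : x = List.replicate c b ++ x.drop c := by
        have hpre : x <+: fm ((b, c) :: L') := ⟨y, h.symm⟩
        have h1 : x.take c = List.replicate c b := by
          have : x.take c = (fm ((b, c) :: L')).take c := by
            rw [List.prefix_iff_eq_take] at hpre
            rw [hpre]; simp [List.take_take, Nat.min_eq_left (le_of_lt hx)]
          rw [this]
          simp only [fm_cons]
          rw [List.take_append_of_le_length (by simp), List.take_replicate]
          simp
        conv_lhs => rw [← List.take_append_drop c x]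
        rw [h1]
      have hfm' : fm L' = x.drop c ++ y := by
        have : List.replicate c b ++ fm L' = fm ((b, c) :: L') := rfl
        rw [h, hxc, List.append_assoc] at this
        exact ((List.append_cancel_left this).symm).symm
      obtain ⟨L₁, L₂, a, c₁, c₂, h1, h2, h3⟩ := ih hL' (x.drop c) hfm'
      refine ⟨(b, c) :: L₁, L₂, a, c₁, c₂, by rw [h1]; rfl, ?_, h3⟩
      rw [hxc, h2, fm_cons, List.append_assoc]

/-- any sublist of a "run word" is itself given by a run list of no greater length -/
lemma decomp (m : ℕ) (R : List α) (s : List α)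
    (h : s <+ (R.flatMap fun a => List.replicate m a)) :
    ∃ L : List (α × ℕ), s = fm L ∧ L.length ≤ R.length := by
  induction R generalizing s with
  | nil => simp at h; exact ⟨[], by simp [h], by simp⟩
  | cons b R' ih =>
    rw [List.flatMap_cons, List.sublist_append_iff] at h
    obtain ⟨x, y, rfl, hx, hy⟩ := h
    obtain ⟨t, -, rfl⟩ := List.sublist_replicate_iff.mp hx
    obtain ⟨L, rfl, hlen⟩ := ih y hy
    exact ⟨(b, t) :: L, rfl, by simpa using Nat.succ_le_succ hlen⟩

/-- normalization of a run list -/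
lemma normalize [DecidableEq α] (L : List (α × ℕ)) :
    ∃ L' : List (α × ℕ), fm L' = fm L ∧ L'.length ≤ L.length ∧ Norm L' := by
  induction L with
  | nil => exact ⟨[], rfl, le_rfl, norm_nil⟩
  | cons p L ih =>
    obtain ⟨L', hfm, hlen, hpos, hchain⟩ := ih
    by_cases hp : p.2 = 0
    · exact ⟨L', by simp [hfm, hp], by simpa using Nat.le_succ_of_le hlen, hpos, hchain⟩
    · match L', hfm, hlen, hpos, hchain with
      | [], hfm, hlen, hpos, hchain =>
        exact ⟨[p], by simp [← hfm], by simp, by simpa using Nat.pos_of_ne_zero hp,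
          List.isChain_singleton _⟩
      | (b, d) :: L'', hfm, hlen, hpos, hchain =>
        by_cases hb : p.1 = b
        · refine ⟨(b, p.2 + d) :: L'', ?_, ?_, ?_, ?_⟩
          · simp only [fm_cons, ← hfm, ← hb, List.replicate_add, List.append_assoc]
          · simp only [List.length_cons] at hlen ⊢; omega
          · intro q hq
            rcases List.mem_cons.mp hq with rfl | hq
            · have := hpos (b, d) (by simp)
              simp at this ⊢; omega
            · exact hpos q (List.mem_cons_of_mem _ hq)
          · rcases List.isChain_cons.mp hchain with ⟨h1, h2⟩
            exact List.isChain_cons.mpr ⟨h1, h2⟩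
        · refine ⟨p :: (b, d) :: L'', by simp only [fm_cons, hfm], by simpa using hlen, ?_, ?_⟩
          · intro q hq
            rcases List.mem_cons.mp hq with rfl | hq
            · exact Nat.pos_of_ne_zero hp
            · exact hpos q hq
          · exact List.isChain_cons_cons.mpr ⟨hb, hchain⟩

lemma fm_eq_nil (L : List (α × ℕ)) (hpos : ∀ p ∈ L, 0 < p.2) (h : fm L = []) : L = [] := by
  cases L with
  | nil => rfl
  | cons p L =>
    exfalso
    have := hpos p (by simp)
    rw [fm_cons, List.append_eq_nil_iff] at h
    rcases h with ⟨h1, -⟩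
    rw [List.replicate_eq_nil_iff] at h1
    omega

lemma norm_tail {p : α × ℕ} {L : List (α × ℕ)} (h : Norm (p :: L)) : Norm L :=
  ⟨fun q hq => h.1 q (List.mem_cons_of_mem _ hq), (List.isChain_cons.mp h.2).2⟩

lemma norm_prefix {L₁ L₂ : List (α × ℕ)} (h : Norm (L₁ ++ L₂)) : Norm L₁ :=
  ⟨fun q hq => h.1 q (by simp [hq]), h.2.prefix ⟨L₂, rfl⟩⟩

lemma norm_mid {L₁ L₂ : List (α × ℕ)} {a : α} {c : ℕ}
    (h : Norm (L₁ ++ (a, c) :: L₂)) (c' : ℕ) (hc' : 0 < c') : Norm ((a, c') :: L₂) := by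
  constructor
  · intro p hp
    rcases List.mem_cons.mp hp with rfl | hp
    · exact hc'
    · exact h.1 p (by simp [hp])
  · have hsuf : List.Chain' (fun p q : α × ℕ => p.1 ≠ q.1) ((a, c) :: L₂) :=
      h.2.suffix ⟨L₁, rfl⟩
    simp only [List.Chain', List.isChain_cons] at hsuf ⊢
    exact hsuf

lemma norm_left {L₁ L₂ : List (α × ℕ)} {a : α} {c : ℕ}
    (h : Norm (L₁ ++ (a, c) :: L₂)) (c' : ℕ) (hc' : 0 < c') : Norm (L₁ ++ [(a, c')]) := by
  constructor
  · intro p hp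
    rcases List.mem_append.mp hp with hp | hp
    · exact h.1 p (by simp [hp])
    · rcases List.mem_singleton.mp hp with rfl
      exact hc'
  · have := h.2
    simp only [List.Chain', List.isChain_append] at this ⊢
    refine ⟨this.1, List.isChain_singleton _, ?_⟩
    intro x hx y hy
    rcases List.mem_singleton.mp (by simpa using hy) with rfl
    exact this.2.2 x hx (a, c) (by simp)

/-- key single-block lemma: a word with `P` runs that is a sublist of
`b₁^m b₂^m ⋯` with distinct `bᵢ` has length at most `P·m`. -/
lemma single_block (m : ℕ) : ∀ RW : List α, RW.Nodup → ∀ L : List (α × ℕ), Norm L →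
    fm L <+ (RW.flatMap fun a => List.replicate m a) →
    (L.map Prod.snd).sum ≤ L.length * m := by
  intro RW
  induction RW with
  | nil =>
    intro _ L hN h
    simp only [List.flatMap_nil, List.sublist_nil] at h
    rw [fm_eq_nil L hN.1 h]
    simp
  | cons b RW' ih =>
    intro hnd L hN h
    by_cases hLnil : L = []
    · subst hLnil; simp
    rw [List.flatMap_cons, List.sublist_append_iff] at h
    obtain ⟨x, y, hxy, hx, hy⟩ := h
    obtain ⟨L₁, L₂, a, c₁, c₂, hL, hxe, hye⟩ := cut L hLnil x y hxy
    subst hL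
    obtain ⟨t, htm, hxt⟩ := List.sublist_replicate_iff.mp hx
    have hxb : ∀ z ∈ x, z = b := by
      intro z hz; rw [hxt] at hz; exact List.eq_of_mem_replicate hz
    have hL1b : ∀ p ∈ L₁, p.1 = b := by
      intro p hp
      apply hxb
      rw [hxe]
      refine List.mem_append.mpr (Or.inl ?_)
      exact List.mem_flatMap.mpr ⟨p, hp,
        List.mem_replicate.mpr ⟨(hN.1 p (by simp [hp])).ne', rfl⟩⟩
    have hc₁b : 0 < c₁ → a = b := by
      intro h0
      refine hxb a ?_
      rw [hxe]
      exact List.mem_append.mpr (Or.inr (List.mem_replicate.mpr ⟨h0.ne', rfl⟩))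
    have hbRW' : b ∉ RW' := (List.nodup_cons.mp hnd).1
    have hc₂0 : 0 < c₁ → c₂ = 0 := by
      intro h0
      by_contra h2
      have hay : a ∈ y := by
        rw [hye]
        exact List.mem_append.mpr (Or.inl (List.mem_replicate.mpr ⟨h2, rfl⟩))
      obtain ⟨b', hb', hab'⟩ := List.mem_flatMap.mp (hy.subset hay)
      rw [List.eq_of_mem_replicate hab'] at hc₁b
      exact hbRW' ((hc₁b h0) ▸ hb')
    rcases L₁ with _ | ⟨⟨b1, d⟩, L₁'⟩
    · -- L₁ = []
      by_cases h0 : c₁ = 0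
      · -- whole word goes to the right
        subst h0
        have hyfm : fm ((a, 0 + c₂) :: L₂) <+ (RW'.flatMap fun a => List.replicate m a) := by
          have : y = fm ((a, 0 + c₂) :: L₂) := by rw [hye]; simp
          rw [← this]; exact hy
        have := ih (List.nodup_cons.mp hnd).2 ((a, 0 + c₂) :: L₂) (by simpa using hN) hyfm
        simpa using this
      · have h2 := hc₂0 (Nat.pos_of_ne_zero h0)
        subst h2
        have hyfm : fm L₂ <+ (RW'.flatMap fun a => List.replicate m a) := by
          have : y = fm L₂ := by rw [hye]; simp
          rw [← this]; exact hy
        have hrec := ih (List.nodup_cons.mp hnd).2 L₂ (norm_tail (by simpa using hN)) hyfm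
        have hc₁m : c₁ ≤ m := by
          have : x.length = c₁ := by rw [hxe]; simp
          rw [hxt] at this
          simp at this
          omega
        simp only [List.nil_append, List.map_cons, List.sum_cons, List.length_cons]
        have : (L₂.length + 1) * m = L₂.length * m + m := by ring
        omega
    · -- L₁ starts with (b1, d)
      have hb1 : b1 = b := hL1b ⟨b1, d⟩ (by simp)
      rcases L₁' with _ | ⟨⟨b2, d2⟩, L₁''⟩
      swap
      · -- two runs on the left of the cut: impossible
        exfalso
        have hb2 : b2 = b := hL1b ⟨b2, d2⟩ (by simp)
        have := hN.2
        simp only [List.cons_append, List.Chain', List.isChain_cons_cons] at this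
        exact this.1 (by simp [hb1, hb2])
      -- L₁ = [(b1, d)]
      have hba : b1 ≠ a := by
        have := hN.2
        simp only [List.cons_append, List.nil_append, List.Chain', List.isChain_cons_cons] at this
        exact this.1
      have h0 : c₁ = 0 := by
        by_contra h0
        exact hba (hb1.trans (hc₁b (Nat.pos_of_ne_zero h0)).symm)
      subst h0
      have hdm : d ≤ m := by
        have hxlen : x.length = d + 0 := by rw [hxe]; simp [fm]
        rw [hxt] at hxlen
        simp at hxlen
        omega
      have hyfm : fm ((a, c₂) :: L₂) <+ (RW'.flatMap fun a => List.replicate m a) := by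
        have : y = fm ((a, c₂) :: L₂) := by rw [hye]; simp
        rw [← this]; exact hy
      by_cases h2 : c₂ = 0
      · subst h2
        have hrec := ih (List.nodup_cons.mp hnd).2 L₂
          (norm_tail (norm_mid (L₁ := [(b1,d)]) hN 1 Nat.one_pos)) (by simpa using hyfm)
        simp only [List.cons_append, List.nil_append, List.map_cons, List.sum_cons,
          List.length_cons]
        have : (L₂.length + 1 + 1) * m = L₂.length * m + m + m := by ring
        omega
      · have hrec := ih (List.nodup_cons.mp hnd).2 ((a, c₂) :: L₂)
          (norm_mid (L₁ := [(b1,d)]) hN c₂ (Nat.pos_of_ne_zero h2)) hyfm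
        simp only [List.map_cons, List.sum_cons, List.length_cons] at hrec
        simp only [List.cons_append, List.nil_append, List.map_cons, List.sum_cons,
          List.length_cons]
        have : (L₂.length + 1 + 1) * m = (L₂.length + 1) * m + m := by ring
        omega

lemma pw_zero (k m : ℕ) : periodicWord k m 0 = [] := rfl

lemma pw_succ (k m q : ℕ) :
    periodicWord k m (q + 1) =
      ((List.finRange k).flatMap fun a => List.replicate m a) ++ periodicWord k m q := by
  unfold periodicWord
  rw [List.replicate_succ, List.flatten_cons]

/-- **Master lemma**: a word with `P` positive runs (adjacent runs with distinct letters)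
that is a sublist of `(1^m ⋯ k^m)^q` has length at most `(q + P − 1)·m`. -/
lemma master (k m : ℕ) : ∀ (q : ℕ) (L : List (Fin k × ℕ)), L ≠ [] → Norm L →
    fm L <+ periodicWord k m (q + 1) →
    (L.map Prod.snd).sum + m ≤ (q + 1 + L.length) * m := by
  intro q
  induction q with
  | zero =>
    intro L hne hN h
    rw [pw_succ, pw_zero, List.append_nil] at h
    have := single_block m (List.finRange k) (List.nodup_finRange k) L hN h
    have e : (0 + 1 + L.length) * m = L.length * m + m := by ring
    omega
  | succ q ih =>
    intro L hne hN h
    rw [pw_succ, List.sublist_append_iff] at h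
    obtain ⟨x, y, hxy, hx, hy⟩ := h
    obtain ⟨L₁, L₂, a, c₁, c₂, hL, hxe, hye⟩ := cut L hne x y hxy
    subst hL
    have hxbound : (L₁.map Prod.snd).sum + c₁ ≤ (L₁.length + 1) * m := by
      by_cases h0 : c₁ = 0
      · subst h0
        have hx' : fm L₁ <+ ((List.finRange k).flatMap fun a => List.replicate m a) := by
          have : x = fm L₁ := by rw [hxe]; simp
          rw [← this]; exact hx
        have := single_block m (List.finRange k) (List.nodup_finRange k) L₁
          (norm_prefix hN) hx'
        have e : (L₁.length + 1) * m = L₁.length * m + m := by ring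
        omega
      · have hnorm := norm_left hN c₁ (Nat.pos_of_ne_zero h0)
        have hx' : fm (L₁ ++ [(a, c₁)]) <+
            ((List.finRange k).flatMap fun a => List.replicate m a) := by
          have : x = fm (L₁ ++ [(a, c₁)]) := by rw [hxe, fm_append]; simp
          rw [← this]; exact hx
        have := single_block m (List.finRange k) (List.nodup_finRange k) _ hnorm hx'
        simpa using this
    have hybound : c₂ + (L₂.map Prod.snd).sum + m ≤ (q + 1 + (L₂.length + 1)) * m := by
      by_cases h2 : c₂ = 0
      · subst h2
        have hy' : fm L₂ <+ periodicWord k m (q + 1) := by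
          have : y = fm L₂ := by rw [hye]; simp
          rw [← this]; exact hy
        by_cases hL2 : L₂ = []
        · subst hL2
          simp only [List.map_nil, List.sum_nil, List.length_nil]
          nlinarith
        · have := ih L₂ hL2 (norm_tail (norm_mid hN 1 Nat.one_pos)) hy'
          nlinarith
      · have hy' : fm ((a, c₂) :: L₂) <+ periodicWord k m (q + 1) := by
          have : y = fm ((a, c₂) :: L₂) := by rw [hye]; simp
          rw [← this]; exact hy
        have := ih ((a, c₂) :: L₂) (by simp) (norm_mid hN c₂ (Nat.pos_of_ne_zero h2)) hy'
        simpa using this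
    have key := add_le_add hxbound hybound
    have e2 : ((L₁ ++ (a, c₁ + c₂) :: L₂).map Prod.snd).sum
        = (L₁.map Prod.snd).sum + (c₁ + c₂) + (L₂.map Prod.snd).sum := by
      simp
      ring
    have e3 : (L₁.length + 1) * m + (q + 1 + (L₂.length + 1)) * m
        = (q + 1 + 1 + (L₁ ++ (a, c₁ + c₂) :: L₂).length) * m := by
      simp [List.length_append]
      ring
    rw [e3] at key
    rw [e2]
    omega

lemma pw_flatMap (k m q : ℕ) : periodicWord k m q =
    (((List.replicate q (List.finRange k)).flatten).flatMap fun a => List.replicate m a) := by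
  induction q with
  | zero => rfl
  | succ q ih =>
    rw [pw_succ, ih, List.replicate_succ, List.flatten_cons, List.flatMap_append]

/-- The central upper bound: a common sublist of `(1^m ⋯ k^m)^q` and of a word
consisting of at most `|R|` constant runs has length at most `q·m + |R|·m`. -/
lemma key {k m m' q : ℕ} (hq : 1 ≤ q) (R : List (Fin k)) (s : List (Fin k))
    (h1 : s <+ periodicWord k m q) (h2 : s <+ (R.flatMap fun a => List.replicate m' a)) :
    s.length ≤ q * m + R.length * m := by
  obtain ⟨L₀, rfl, hlen₀⟩ := decomp m' R s h2
  obtain ⟨L, hfm, hlen, hN⟩ := normalize L₀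
  by_cases hL : L = []
  · subst hL
    simp only [fm_nil] at hfm
    rw [← hfm]
    simp
  · obtain ⟨q', rfl⟩ := Nat.exists_eq_add_of_le hq
    have hm := master k m q' L hL hN (by rw [hfm]; rwa [Nat.add_comm 1 q'] at h1)
    have hlength : (fm L₀).length = (L.map Prod.snd).sum := by
      rw [← hfm, fm_length]
    rw [hlength]
    have hmul : L.length * m ≤ R.length * m :=
      Nat.mul_le_mul_right m (le_trans hlen hlen₀)
    have e : (q' + 1 + L.length) * m = (1 + q') * m + L.length * m := by ring
    omega

lemma const_bound {k m q : ℕ} (hq : 1 ≤ q) (t : ℕ) (a : Fin k)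
    (h : List.replicate t a <+ periodicWord k m q) : t ≤ q * m := by
  rcases Nat.eq_zero_or_pos t with rfl | ht
  · exact Nat.zero_le _
  obtain ⟨q', rfl⟩ := Nat.exists_eq_add_of_le hq
  have hm := master k m q' [(a, t)] (by simp) ⟨by simpa using ht, List.isChain_singleton _⟩
    (by simpa [fm] using (by rwa [Nat.add_comm 1 q'] at h))
  simp only [List.map_cons, List.map_nil, List.sum_cons, List.sum_nil, List.length_cons,
    List.length_nil] at hm
  have e : (q' + 1 + (0 + 1)) * m = q' * m + m + m := by ring
  have e2 : (1 + q') * m = q' * m + m := by ring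
  omega

lemma flatMap_rep_pairwise {k m : ℕ} (R : List (Fin k)) (hR : R.Pairwise (· ≤ ·)) :
    (R.flatMap fun a => List.replicate m a).Pairwise (· ≤ ·) := by
  induction R with
  | nil => simp
  | cons b R' ih =>
    rw [List.flatMap_cons, List.pairwise_append]
    refine ⟨List.pairwise_replicate.mpr (Or.inr le_rfl), ih (List.Pairwise.of_cons hR), ?_⟩
    intro x hx y hy
    have hxb : x = b := List.eq_of_mem_replicate hx
    obtain ⟨b', hb', hy'⟩ := List.mem_flatMap.mp hy
    rw [List.eq_of_mem_replicate hy', hxb]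
    exact List.rel_of_pairwise_cons hR hb'

lemma pw_one_sorted (k m : ℕ) : (periodicWord k m 1).Pairwise (· ≤ ·) := by
  have : periodicWord k m 1 = (List.finRange k).flatMap fun a => List.replicate m a := by
    rw [pw_succ, pw_zero, List.append_nil]
  rw [this]
  exact flatMap_rep_pairwise _ ((List.pairwise_lt_finRange k).imp le_of_lt)

lemma pw_one_reverse (k m : ℕ) : (periodicWord k m 1).reverse =
    ((List.finRange k).reverse.flatMap fun a => List.replicate m a) := by
  rw [pw_succ, pw_zero, List.append_nil, List.reverse_flatMap]
  simp [Function.comp_def]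

lemma const_common {k : ℕ} (hk : 0 < k) (w s : List (Fin k)) (hw : w.Pairwise (· ≤ ·))
    (h1 : s <+ w) (h2 : s <+ w.reverse) :
    ∃ a : Fin k, s = List.replicate s.length a := by
  cases s with
  | nil => exact ⟨⟨0, hk⟩, by simp⟩
  | cons hd tl =>
    refine ⟨hd, ?_⟩
    have hle : (hd :: tl).Pairwise (· ≤ ·) := List.Pairwise.sublist h1 hw
    have hge : (hd :: tl).Pairwise (fun x y : Fin k => y ≤ x) := by
      have h3 := h2.reverse
      rw [List.reverse_reverse] at h3
      have h4 := List.Pairwise.sublist h3 hw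
      rwa [List.pairwise_reverse] at h4
    refine List.eq_replicate_length.mpr ?_
    intro b hb
    rcases List.mem_cons.mp hb with rfl | hb
    · rfl
    · exact le_antisymm (List.rel_of_pairwise_cons hge hb)
        (List.rel_of_pairwise_cons hle hb)

lemma flatten_rep_length {k q : ℕ} :
    ((List.replicate q (List.finRange k)).flatten).length = q * k := by
  simp [List.length_flatten, List.map_replicate, List.sum_replicate, smul_eq_mul]

lemma pow_split {M r i : ℕ} (hir : i ≤ r) : M ^ (r - i) * M ^ i = M ^ r := by
  rw [← pow_add]; congr 1; omega

lemma case_pw_pw {k r M : ℕ} (hM : 1 ≤ M) {i j : ℕ} (hij : i < j) (hjr : j ≤ r)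
    (s : List (Fin k))
    (h1 : s <+ periodicWord k (M ^ i) (M ^ (r - i)))
    (h2 : s <+ periodicWord k (M ^ j) (M ^ (r - j))) :
    s.length ≤ M ^ r + k * M ^ (r - 1) := by
  rw [pw_flatMap] at h2
  have hb := key (Nat.one_le_pow _ _ hM) _ s h1 h2
  rw [flatten_rep_length] at hb
  refine le_trans hb ?_
  have e2 : M ^ (r - j) * k * M ^ i = k * M ^ (r - j + i) := by
    rw [mul_comm (M ^ (r - j)) k, mul_assoc, ← pow_add]
  rw [pow_split (by omega), e2]
  exact Nat.add_le_add_left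
    (Nat.mul_le_mul le_rfl (Nat.pow_le_pow_right hM (by omega))) _

lemma case_pw_rev {k r M : ℕ} (hM : 1 ≤ M) {i : ℕ} (hir : i < r) (s : List (Fin k))
    (h1 : s <+ periodicWord k (M ^ i) (M ^ (r - i)))
    (h2 : s <+ (periodicWord k (M ^ r) 1).reverse) :
    s.length ≤ M ^ r + k * M ^ (r - 1) := by
  rw [pw_one_reverse] at h2
  have hb := key (Nat.one_le_pow _ _ hM) _ s h1 h2
  rw [List.length_reverse, List.length_finRange] at hb
  refine le_trans hb ?_
  rw [pow_split (by omega)]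
  exact Nat.add_le_add_left
    (Nat.mul_le_mul le_rfl (Nat.pow_le_pow_right hM (by omega))) _

lemma case_r_rev {k r M : ℕ} (hk : 0 < k) (s : List (Fin k))
    (h1 : s <+ periodicWord k (M ^ r) 1)
    (h2 : s <+ (periodicWord k (M ^ r) 1).reverse) :
    s.length ≤ M ^ r := by
  obtain ⟨a, ha⟩ := const_common hk _ s (pw_one_sorted k (M ^ r)) h1 h2
  rw [ha] at h1
  have := const_bound le_rfl _ a h1
  simpa using this

lemma case_rep_pw {k r M i n : ℕ} (hM : 1 ≤ M) (hir : i ≤ r) (a : Fin k)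
    (s : List (Fin k))
    (h1 : s <+ List.replicate n a)
    (h2 : s <+ periodicWord k (M ^ i) (M ^ (r - i))) :
    s.length ≤ M ^ r := by
  obtain ⟨t, -, rfl⟩ := List.sublist_replicate_iff.mp h1
  have hb := const_bound (Nat.one_le_pow _ _ hM) t a h2
  rw [List.length_replicate]
  exact le_trans hb (le_of_eq (pow_split hir))

lemma case_rep_rev {k r M n : ℕ} (a : Fin k) (s : List (Fin k))
    (h1 : s <+ List.replicate n a)
    (h2 : s <+ (periodicWord k (M ^ r) 1).reverse) :
    s.length ≤ M ^ r := by
  obtain ⟨t, -, rfl⟩ := List.sublist_replicate_iff.mp h1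
  have h2' := h2.reverse
  rw [List.reverse_reverse, List.reverse_replicate] at h2'
  have hb := const_bound le_rfl t a h2'
  rw [List.length_replicate]
  simpa using hb

lemma case_rep_rep {k n : ℕ} {a b : Fin k} (hab : a ≠ b) (s : List (Fin k))
    (h1 : s <+ List.replicate n a) (h2 : s <+ List.replicate n b) :
    s.length = 0 := by
  obtain ⟨t, -, rfl⟩ := List.sublist_replicate_iff.mp h1
  rcases Nat.eq_zero_or_pos t with rfl | ht
  · simp
  · exfalso
    have : a ∈ List.replicate n b := h2.subset (List.mem_replicate.mpr ⟨ht.ne', rfl⟩)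
    exact hab (List.eq_of_mem_replicate this)

end LCSAux

open LCSAux in
/-- Let `k ≥ 2`, `r ≥ 1`, `M ≥ 1` and `n = k·M^r`.  For `0 ≤ i ≤ r` let
`m_i = M^i` and `w_i = (1^{m_i} 2^{m_i} ⋯ k^{m_i})^{n/(k·m_i)}`.  Then for the family
`W = {w_0, …, w_r, rev(w_r), 1^n, …, k^n}` of `k + r + 2` words, every two distinct words of
`W` have longest common subsequence of length at most `n/k + k·M^{r-1}`
(that is, at most `n/k + k^{1/r}·n^{1-1/r}`). -/
theorem lcs_upper_bound_family (k r M n : ℕ) (hk : 2 ≤ k) (hr : 1 ≤ r) (hM : 1 ≤ M)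
    (hn : n = k * M ^ r)
    (W : Set (List (Fin k)))
    (hW : W = {w | (∃ i ≤ r, w = periodicWord k (M ^ i) (n / (k * M ^ i))) ∨
                   w = (periodicWord k (M ^ r) (n / (k * M ^ r))).reverse ∨
                   (∃ a : Fin k, w = List.replicate n a)}) :
    ∀ u ∈ W, ∀ v ∈ W, u ≠ v →
      ∀ s : List (Fin k), s.Sublist u → s.Sublist v →
        s.length ≤ n / k + k * M ^ (r - 1) := by
  subst hW
  have hk0 : 0 < k := by omega
  have hdiv : ∀ i, i ≤ r → n / (k * M ^ i) = M ^ (r - i) := by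
    intro i hi
    have hsum : i + (r - i) = r := by omega
    have h : k * M ^ i * M ^ (r - i) = n := by
      rw [mul_assoc, ← pow_add, hsum, hn]
    rw [← h, Nat.mul_div_cancel_left _ (Nat.mul_pos hk0 (Nat.one_le_pow _ _ hM))]
  have hnk : n / k = M ^ r := by rw [hn, Nat.mul_div_cancel_left _ hk0]
  have hrr : n / (k * M ^ r) = 1 := by rw [hdiv r le_rfl, Nat.sub_self, pow_zero]
  intro u hu v hv hne s hsu hsv
  simp only [Set.mem_setOf_eq] at hu hv
  rw [hnk]
  rcases hu with ⟨i, hi, rfl⟩ | rfl | ⟨a, rfl⟩ <;>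
    rcases hv with ⟨j, hj, rfl⟩ | rfl | ⟨b, rfl⟩
  · -- w_i vs w_j
    rw [hdiv i hi] at hsu
    rw [hdiv j hj] at hsv
    rcases lt_trichotomy (M ^ i) (M ^ j) with h | h | h
    · have hij : i < j := by
        by_contra hc
        push_neg at hc
        exact absurd (Nat.pow_le_pow_right hM hc) (by omega)
      exact case_pw_pw hM hij hj s hsu hsv
    · exact absurd (by rw [h]) hne
    · have hji : j < i := by
        by_contra hc
        push_neg at hc
        exact absurd (Nat.pow_le_pow_right hM hc) (by omega)
      exact case_pw_pw hM hji hi s hsv hsu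
  · -- w_i vs rev(w_r)
    rw [hdiv i hi] at hsu
    rw [hrr] at hsv
    by_cases hir : i = r
    · subst hir
      rw [Nat.sub_self, pow_zero] at hsu
      exact le_trans (case_r_rev hk0 s hsu hsv) (Nat.le_add_right _ _)
    · exact case_pw_rev hM (by omega) s hsu hsv
  · -- w_i vs b^n
    rw [hdiv i hi] at hsu
    exact le_trans (case_rep_pw hM hi b s hsv hsu) (Nat.le_add_right _ _)
  · -- rev(w_r) vs w_j
    rw [hdiv j hj] at hsv
    rw [hrr] at hsu
    by_cases hjr : j = r
    · subst hjr
      rw [Nat.sub_self, pow_zero] at hsv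
      exact le_trans (case_r_rev hk0 s hsv hsu) (Nat.le_add_right _ _)
    · exact case_pw_rev hM (by omega) s hsv hsu
  · -- rev vs rev
    exact absurd rfl hne
  · -- rev(w_r) vs b^n
    rw [hrr] at hsu
    exact le_trans (case_rep_rev b s hsv hsu) (Nat.le_add_right _ _)
  · -- a^n vs w_j
    rw [hdiv j hj] at hsv
    exact le_trans (case_rep_pw hM hj a s hsu hsv) (Nat.le_add_right _ _)
  · -- a^n vs rev(w_r)
    rw [hrr] at hsv
    exact le_trans (case_rep_rev a s hsu hsv) (Nat.le_add_right _ _)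
  · -- a^n vs b^n
    have hab : a ≠ b := fun h => hne (by rw [h])
    rw [case_rep_rep hab s hsu hsv]
    exact Nat.zero_le _
end

section
/- Let k ≥ 2, r ≥ 1 and M ≥ 1 be integers and set n = k·M^r. For 0 ≤ i ≤ r let m_i = M^i and let w_i be the word (1^{m_i} 2^{m_i} ⋯ k^{m_i})^{n/(k·m_i)} of length n over the alphabet [k], and let rev(w_r) be the reversal of w_r. Each word in the family {w_0, w_1, …, w_r, rev(w_r)} is balanced, and every two distinct words of this family have longest common subsequence of length at most n/k + k·M^{r−1} (that is, at most n/k + k^{1/r}·n^{1−1/r}). -/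
namespace LCSAux

variable {α : Type*} [DecidableEq α]

/-- number of maximal constant runs -/
def runs : List α → ℕ
  | [] => 0
  | a :: l => runs l + (if l.head? = some a then 0 else 1)

lemma runs_nil : runs ([] : List α) = 0 := rfl

lemma runs_cons (a : α) (l : List α) :
    runs (a :: l) = runs l + (if l.head? = some a then 0 else 1) := rfl

lemma runs_append_le (x y : List α) : runs (x ++ y) ≤ runs x + runs y := by
  induction x with
  | nil => simp [runs_nil]
  | cons a x ih =>
    rw [List.cons_append, runs_cons, runs_cons]
    cases x with
    | nil =>
      have h1 : (([] : List α).head? = some a) = False := by simp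
      simp only [List.nil_append, runs_nil, h1, if_false]
      split <;> omega
    | cons b x' =>
      simp only [List.cons_append, List.head?_cons] at ih ⊢
      by_cases h : some b = some a
      · simp [h] <;> omega
      · simp [h] <;> omega

lemma runs_ge_append (x y : List α) : runs x + runs y ≤ runs (x ++ y) + 1 := by
  induction x with
  | nil => simp [runs_nil]
  | cons a x ih =>
    rw [List.cons_append, runs_cons, runs_cons]
    cases x with
    | nil =>
      have h1 : (([] : List α).head? = some a) = False := by simp
      simp only [List.nil_append, runs_nil, h1, if_false]
      split <;> omega
    | cons b x' =>
      simp only [List.cons_append, List.head?_cons] at ih ⊢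
      by_cases h : some b = some a
      · simp [h] <;> omega
      · simp [h] <;> omega

lemma runs_replicate_le (t : ℕ) (c : α) : runs (List.replicate t c) ≤ 1 := by
  induction t with
  | zero => simp [runs_nil]
  | succ t ih =>
    cases t with
    | zero => simp [runs_cons, runs_nil]
    | succ u =>
      rw [List.replicate_succ, runs_cons]
      rw [List.replicate_succ, List.head?_cons, if_pos rfl]
      rw [← List.replicate_succ]
      omega

lemma runs_replicate_append (t : ℕ) (c : α) (s : List α) (hc : c ∉ s) (ht : t ≠ 0) :
    1 + runs s ≤ runs (List.replicate t c ++ s) := by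
  induction t with
  | zero => omega
  | succ t ih =>
    cases t with
    | zero =>
      simp only [List.replicate_succ, List.replicate_zero, List.nil_append,
        List.cons_append, runs_cons]
      have h1 : s.head? ≠ some c := fun h => hc (List.mem_of_mem_head? h)
      rw [if_neg h1]
      omega
    | succ u =>
      have h2 := ih (by omega)
      rw [List.replicate_succ, List.cons_append, runs_cons]
      have h3 : ((List.replicate (u + 1) c ++ s)).head? = some c := by
        rw [List.replicate_succ, List.cons_append, List.head?_cons]
      rw [h3, if_pos rfl]
      omega

/-- The block `1^a 2^a ⋯` over letter list `L`. -/
def block (L : List α) (a : ℕ) : List α := L.flatMap fun c => List.replicate a c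

lemma block_cons (c : α) (L : List α) (a : ℕ) :
    block (c :: L) a = List.replicate a c ++ block L a := by
  simp [block]

lemma mem_block {L : List α} {a : ℕ} {x : α} (hx : x ∈ block L a) : x ∈ L := by
  simp only [block, List.mem_flatMap, List.mem_replicate] at hx
  obtain ⟨c, hc, _, rfl⟩ := hx
  exact hc

lemma runs_le_of_sublist_block {L : List α} {a : ℕ} {s : List α}
    (hs : s.Sublist (block L a)) : runs s ≤ L.length := by
  induction L generalizing s with
  | nil =>
    simp only [block, List.flatMap_nil, List.sublist_nil] at hs
    simp [hs, runs]
  | cons c L ih =>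
    rw [block_cons] at hs
    rw [List.sublist_append_iff] at hs
    obtain ⟨s1, s2, rfl, h1, h2⟩ := hs
    calc runs (s1 ++ s2) ≤ runs s1 + runs s2 := runs_append_le _ _
      _ ≤ 1 + L.length := by
        obtain ⟨t, -, rfl⟩ := List.sublist_replicate_iff.1 h1
        exact Nat.add_le_add (runs_replicate_le _ _) (ih h2)
      _ = (c :: L).length := by simp [Nat.add_comm]

lemma length_le_of_sublist_block {L : List α} {a : ℕ} {s : List α} (hL : L.Nodup)
    (hs : s.Sublist (block L a)) : s.length ≤ a * runs s := by
  induction L generalizing s with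
  | nil =>
    simp only [block, List.flatMap_nil, List.sublist_nil] at hs
    simp [hs]
  | cons c L ih =>
    rw [block_cons] at hs
    rw [List.sublist_append_iff] at hs
    obtain ⟨s1, s2, rfl, h1, h2⟩ := hs
    obtain ⟨t, ht, rfl⟩ := List.sublist_replicate_iff.1 h1
    have hL' : L.Nodup := hL.of_cons
    have hcs2 : c ∉ s2 := fun h => (List.nodup_cons.1 hL).1 (mem_block (h2.subset h))
    rcases Nat.eq_zero_or_pos t with rfl | htpos
    · simpa using ih hL' h2
    · have hruns : 1 + runs s2 ≤ runs (List.replicate t c ++ s2) :=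
        runs_replicate_append t c s2 hcs2 (by omega)
      have h2' := ih hL' h2
      calc (List.replicate t c ++ s2).length = t + s2.length := by simp
        _ ≤ a + a * runs s2 := Nat.add_le_add ht h2'
        _ = a * (1 + runs s2) := by ring
        _ ≤ a * runs (List.replicate t c ++ s2) := Nat.mul_le_mul_left a hruns

/-- `q` copies of the block. -/
def pw (L : List α) (a q : ℕ) : List α := (List.replicate q (block L a)).flatten

lemma pw_succ_s4 (L : List α) (a q : ℕ) : pw L a (q + 1) = block L a ++ pw L a q := by
  simp [pw, List.replicate_succ]

lemma runs_le_of_sublist_pw {L : List α} {a q : ℕ} {s : List α}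
    (hs : s.Sublist (pw L a q)) : runs s ≤ L.length * q := by
  induction q generalizing s with
  | zero =>
    simp only [pw, List.replicate_zero, List.flatten_nil, List.sublist_nil] at hs
    simp [hs, runs]
  | succ q ih =>
    rw [pw_succ_s4, List.sublist_append_iff] at hs
    obtain ⟨s1, s2, rfl, h1, h2⟩ := hs
    calc runs (s1 ++ s2) ≤ runs s1 + runs s2 := runs_append_le _ _
      _ ≤ L.length + L.length * q := Nat.add_le_add (runs_le_of_sublist_block h1) (ih h2)
      _ = L.length * (q + 1) := by ring

lemma length_le_of_sublist_pw {L : List α} {a q : ℕ} {s : List α} (hL : L.Nodup)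
    (hs : s.Sublist (pw L a q)) : s.length ≤ a * q + a * runs s := by
  induction q generalizing s with
  | zero =>
    simp only [pw, List.replicate_zero, List.flatten_nil, List.sublist_nil] at hs
    simp [hs]
  | succ q ih =>
    rw [pw_succ_s4, List.sublist_append_iff] at hs
    obtain ⟨s1, s2, rfl, h1, h2⟩ := hs
    have hr : runs s1 + runs s2 ≤ runs (s1 ++ s2) + 1 := runs_ge_append _ _
    calc (s1 ++ s2).length = s1.length + s2.length := by simp
      _ ≤ a * runs s1 + (a * q + a * runs s2) :=
          Nat.add_le_add (length_le_of_sublist_block hL h1) (ih h2)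
      _ = a * q + a * (runs s1 + runs s2) := by ring
      _ ≤ a * q + a * (runs (s1 ++ s2) + 1) :=
          Nat.add_le_add_left (Nat.mul_le_mul_left a hr) _
      _ = a * (q + 1) + a * runs (s1 ++ s2) := by ring

lemma count_block (L : List α) (a : ℕ) (x : α) :
    (block L a).count x = a * L.count x := by
  induction L with
  | nil => simp [block]
  | cons c L ih =>
    rw [block_cons, List.count_append, ih, List.count_cons, List.count_replicate]
    split <;> rename_i h <;> simp_all <;> ring

lemma length_block (L : List α) (a : ℕ) : (block L a).length = L.length * a := by
  induction L with
  | nil => simp [block]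
  | cons c L ih => rw [block_cons]; simp [ih]; ring

lemma count_pw (L : List α) (a q : ℕ) (x : α) :
    (pw L a q).count x = q * (a * L.count x) := by
  induction q with
  | zero => simp [pw]
  | succ q ih => rw [pw_succ_s4, List.count_append, ih, count_block]; ring

lemma length_pw (L : List α) (a q : ℕ) : (pw L a q).length = q * (L.length * a) := by
  induction q with
  | zero => simp [pw]
  | succ q ih => rw [pw_succ_s4, List.length_append, ih, length_block]; ring

lemma pairwise_block {R : α → α → Prop} {L : List α} (a : ℕ)
    (hrefl : ∀ c ∈ L, R c c) (hL : L.Pairwise R) : (block L a).Pairwise R := by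
  induction L with
  | nil => simp [block]
  | cons c L ih =>
    rw [block_cons, List.pairwise_append]
    refine ⟨?_, ih (fun d hd => hrefl d (List.mem_cons_of_mem _ hd)) hL.of_cons, ?_⟩
    · apply List.pairwise_replicate.2
      right; exact hrefl c List.mem_cons_self
    · intro x hx y hy
      obtain rfl := (List.eq_of_mem_replicate hx)
      have := mem_block hy
      exact (List.pairwise_cons.1 hL).1 y this

lemma reverse_pw_one (L : List α) (a : ℕ) :
    (pw L a 1).reverse = pw L.reverse a 1 := by
  simp [pw, block, List.reverse_flatMap, Function.comp_def]

lemma pw_one (L : List α) (a : ℕ) : pw L a 1 = block L a := by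
  simp [pw]

end LCSAux

lemma periodicWord_eq_pw (k m q : ℕ) :
    periodicWord k m q = LCSAux.pw (List.finRange k) m q := rfl

/-- Let `k ≥ 2`, `r ≥ 1`, `M ≥ 1` and `n = k·M^r`.  For `0 ≤ i ≤ r` let
`m_i = M^i` and `w_i = (1^{m_i} 2^{m_i} ⋯ k^{m_i})^{n/(k·m_i)}`.  Each word of the family
`{w_0, …, w_r, rev(w_r)}` is balanced (every letter occurs exactly `n/k` times), and every
two distinct words of this family have longest common subsequence of length at most
`n/k + k·M^{r-1}` (that is, at most `n/k + k^{1/r}·n^{1-1/r}`). -/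
theorem lcs_upper_bound_balanced_family (k r M n : ℕ) (hk : 2 ≤ k) (hr : 1 ≤ r) (hM : 1 ≤ M)
    (hn : n = k * M ^ r)
    (W : Set (List (Fin k)))
    (hW : W = {w | (∃ i ≤ r, w = periodicWord k (M ^ i) (n / (k * M ^ i))) ∨
                   w = (periodicWord k (M ^ r) (n / (k * M ^ r))).reverse}) :
    (∀ w ∈ W, w.length = n ∧ ∀ a : Fin k, w.count a = n / k) ∧
    (∀ u ∈ W, ∀ v ∈ W, u ≠ v →
      ∀ s : List (Fin k), s.Sublist u → s.Sublist v →
        s.length ≤ n / k + k * M ^ (r - 1)) := by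
  classical
  open LCSAux in
  subst hn
  have hk0 : 0 < k := by omega
  have hMpos : 0 < M := hM
  have hpowM : ∀ i j : ℕ, i ≤ j → M ^ i ≤ M ^ j := fun i j h => Nat.pow_le_pow_right hM h
  have hnk : k * M ^ r / k = M ^ r := Nat.mul_div_cancel_left _ hk0
  have hdiv : ∀ i, i ≤ r → k * M ^ r / (k * M ^ i) = M ^ (r - i) := by
    intro i hi
    have h1 : k * M ^ r = k * M ^ i * M ^ (r - i) := by
      rw [mul_assoc, ← pow_add, Nat.add_sub_cancel' hi]
    rw [h1, Nat.mul_div_cancel_left _ (by positivity)]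
  have hw : ∀ i, i ≤ r →
      periodicWord k (M ^ i) (k * M ^ r / (k * M ^ i)) =
        LCSAux.pw (List.finRange k) (M ^ i) (M ^ (r - i)) := by
    intro i hi
    rw [hdiv i hi, periodicWord_eq_pw]
  -- basic facts
  have hcount : ∀ i, i ≤ r → ∀ a : Fin k,
      (LCSAux.pw (List.finRange k) (M ^ i) (M ^ (r - i))).count a = M ^ r := by
    intro i hi a
    rw [LCSAux.count_pw]
    have h1 : (List.finRange k).count a = 1 :=
      List.count_eq_one_of_mem (List.nodup_finRange k) (List.mem_finRange a)
    rw [h1, mul_one, ← pow_add, Nat.sub_add_cancel hi]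
  have hlen : ∀ i, i ≤ r →
      (LCSAux.pw (List.finRange k) (M ^ i) (M ^ (r - i))).length = k * M ^ r := by
    intro i hi
    rw [LCSAux.length_pw, List.length_finRange]
    calc M ^ (r - i) * (k * M ^ i) = k * (M ^ i * M ^ (r - i)) := by ring
      _ = k * M ^ r := by rw [← pow_add, Nat.add_sub_cancel' hi]
  constructor
  · -- balancedness
    intro w hwW
    rw [hW] at hwW
    rcases hwW with ⟨i, hi, rfl⟩ | rfl
    · rw [hw i hi]
      exact ⟨hlen i hi, fun a => by rw [hcount i hi a, hnk]⟩
    · rw [hw r le_rfl]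
      refine ⟨by rw [List.length_reverse]; exact hlen r le_rfl, fun a => ?_⟩
      rw [List.count_reverse, hcount r le_rfl a, hnk]
  · -- LCS bound
    rw [hnk]
    -- the main lemma for two forward words with i < j
    have hmain : ∀ i j, i < j → j ≤ r → ∀ s : List (Fin k),
        s.Sublist (LCSAux.pw (List.finRange k) (M ^ i) (M ^ (r - i))) →
        s.Sublist (LCSAux.pw (List.finRange k) (M ^ j) (M ^ (r - j))) →
        s.length ≤ M ^ r + k * M ^ (r - 1) := by
      intro i j hij hjr s hsi hsj
      have hruns : LCSAux.runs s ≤ k * M ^ (r - j) := by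
        have := LCSAux.runs_le_of_sublist_pw hsj
        rwa [List.length_finRange] at this
      have hlen' := LCSAux.length_le_of_sublist_pw (List.nodup_finRange k) hsi
      calc s.length ≤ M ^ i * M ^ (r - i) + M ^ i * LCSAux.runs s := hlen'
        _ ≤ M ^ r + M ^ i * (k * M ^ (r - j)) := by
            rw [← pow_add, Nat.add_sub_cancel' (le_of_lt (lt_of_lt_of_le hij hjr))]
            exact Nat.add_le_add_left (Nat.mul_le_mul_left _ hruns) _
        _ = M ^ r + k * (M ^ i * M ^ (r - j)) := by ring
        _ ≤ M ^ r + k * M ^ (r - 1) := by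
            refine Nat.add_le_add_left (Nat.mul_le_mul_left _ ?_) _
            rw [← pow_add]
            exact hpowM _ _ (by omega)
    -- the reversed word
    have hrev_eq : (LCSAux.pw (List.finRange k) (M ^ r) (M ^ (r - r))).reverse =
        LCSAux.pw (List.finRange k).reverse (M ^ r) 1 := by
      rw [Nat.sub_self, pow_zero]
      exact LCSAux.reverse_pw_one _ _
    -- lemma for forward word w_i against the reversed word
    have hmainrev : ∀ i, i ≤ r → ∀ s : List (Fin k),
        s.Sublist (LCSAux.pw (List.finRange k) (M ^ i) (M ^ (r - i))) →
        s.Sublist ((LCSAux.pw (List.finRange k) (M ^ r) (M ^ (r - r))).reverse) →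
        s.length ≤ M ^ r + k * M ^ (r - 1) := by
      intro i hi s hsi hsr
      rcases Nat.lt_or_ge i r with hilt | hige
      · -- i < r : runs bound from the reversed word
        rw [hrev_eq] at hsr
        have hruns : LCSAux.runs s ≤ k * 1 := by
          have := LCSAux.runs_le_of_sublist_pw hsr
          rwa [List.length_reverse, List.length_finRange] at this
        have hlen' := LCSAux.length_le_of_sublist_pw (List.nodup_finRange k) hsi
        calc s.length ≤ M ^ i * M ^ (r - i) + M ^ i * LCSAux.runs s := hlen'
          _ ≤ M ^ r + M ^ i * (k * 1) := by
              rw [← pow_add, Nat.add_sub_cancel' hi]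
              exact Nat.add_le_add_left (Nat.mul_le_mul_left _ hruns) _
          _ = M ^ r + k * M ^ i := by ring
          _ ≤ M ^ r + k * M ^ (r - 1) := by
              exact Nat.add_le_add_left (Nat.mul_le_mul_left _ (hpowM _ _ (by omega))) _
      · -- i = r : monotone both ways
        have hieq : i = r := le_antisymm hi hige
        subst hieq
        rw [Nat.sub_self, pow_zero, LCSAux.pw_one] at hsi hsr
        have hsorted : (LCSAux.block (List.finRange k) (M ^ i)).Pairwise (· ≤ ·) := by
          apply LCSAux.pairwise_block
          · exact fun c _ => le_refl c
          · exact (List.pairwise_lt_finRange k).imp le_of_lt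
        have h1 : s.Pairwise (· ≤ ·) := List.Pairwise.sublist hsi hsorted
        have hsr' : s.reverse.Sublist (LCSAux.block (List.finRange k) (M ^ i)) := by
          simpa using hsr.reverse
        have h2 : s.Pairwise (fun a b : Fin k => b ≤ a) := by
          rw [← List.pairwise_reverse]
          exact List.Pairwise.sublist hsr' hsorted
        -- s is constant
        cases s with
        | nil => simp
        | cons c t =>
          have hconst : ∀ b ∈ c :: t, c = b := by
            intro b hb
            rcases List.mem_cons.1 hb with rfl | hb
            · rfl
            · exact le_antisymm ((List.pairwise_cons.1 h1).1 b hb)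
                ((List.pairwise_cons.1 h2).1 b hb)
          have hcnt : (c :: t).count c = (c :: t).length :=
            List.count_eq_length.2 hconst
          have hle : (c :: t).count c ≤
              (LCSAux.block (List.finRange k) (M ^ i)).count c := hsi.count_le c
          rw [LCSAux.count_block] at hle
          have h1' : (List.finRange k).count c = 1 :=
            List.count_eq_one_of_mem (List.nodup_finRange k) (List.mem_finRange c)
          rw [h1', mul_one] at hle
          omega
    intro u hu v hv hne s hsu hsv
    rw [hW] at hu hv
    rcases hu with ⟨i, hi, rfl⟩ | rfl <;> rcases hv with ⟨j, hj, rfl⟩ | rfl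
    · -- both forward
      rw [hw i hi] at hsu
      rw [hw j hj] at hsv
      rcases Nat.lt_trichotomy i j with hij | hij | hij
      · exact hmain i j hij hj s hsu hsv
      · exact absurd (by rw [hij]) hne
      · exact hmain j i hij hi s hsv hsu
    · rw [hw i hi] at hsu
      rw [hw r le_rfl] at hsv
      exact hmainrev i hi s hsu hsv
    · rw [hw j hj] at hsv
      rw [hw r le_rfl] at hsu
      exact hmainrev j hj s hsv hsu
    · exact absurd rfl hne
end

section
/- Let k ≥ 2 and let m, M, s, t be positive integers with k·m·s = k·M·t = n and m ≤ M. Let u = (1^m 2^m ⋯ k^m)^s and v = (1^M 2^M ⋯ k^M)^t, and let rev(v) denote the reversal of v. Then LCS(u, v) ≤ n/k + (m/M)·n, and likewise LCS(u, rev(v)) ≤ n/k + (m/M)·n. -/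
lemma length_flatMap_replicate {α : Type*} (m : ℕ) (L : List α) :
    (L.flatMap fun a => List.replicate m a).length = L.length * m := by
  simp [List.length_flatMap, Function.comp_def, List.map_const', List.sum_replicate, mul_comm]

lemma length_flatten_replicate {α : Type*} (q : ℕ) (B : List α) :
    (List.replicate q B).flatten.length = q * B.length := by
  simp [List.length_flatten, List.map_replicate, List.sum_replicate]

lemma getElem_flatMap_replicate {α : Type*} (m : ℕ) (hm : 0 < m) :
    ∀ (L : List α) (p : ℕ) (h : p < (L.flatMap fun a => List.replicate m a).length)
      (h' : p / m < L.length),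
      (L.flatMap fun a => List.replicate m a)[p] = L[p / m] := by
  intro L
  induction L with
  | nil => intro p h h'; simp at h'
  | cons a L ih =>
    intro p h h'
    simp only [List.flatMap_cons]
    by_cases hp : p < m
    · rw [List.getElem_append_left (by simpa using hp), List.getElem_replicate]
      have : p / m = 0 := Nat.div_eq_of_lt hp
      simp [this]
    · push_neg at hp
      have hlen : (List.replicate m a).length ≤ p := by simpa using hp
      have hd : p / m = (p - m) / m + 1 := Nat.div_eq_sub_div hm hp
      have h'' : (p - m) / m < L.length := by
        rw [hd] at h'; simpa using h'
      rw [length_flatMap_replicate, List.length_cons, Nat.succ_mul] at h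
      have hrest : p - m < (L.flatMap fun a => List.replicate m a).length := by
        rw [length_flatMap_replicate]; omega
      rw [List.getElem_append_right hlen]
      simp only [List.length_replicate]
      rw [ih (p - m) hrest h'']
      simp only [hd, List.getElem_cons_succ]

lemma getElem_flatten_replicate {α : Type*} (B : List α) (hB : 0 < B.length) :
    ∀ (q : ℕ) (p : ℕ) (h : p < (List.replicate q B).flatten.length),
      (List.replicate q B).flatten[p] = B[p % B.length]'(Nat.mod_lt _ hB) := by
  intro q
  induction q with
  | zero => intro p h; simp at h
  | succ q ih =>
    intro p h
    simp only [List.replicate_succ, List.flatten_cons]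
    by_cases hp : p < B.length
    · rw [List.getElem_append_left hp]
      congr 1
      exact (Nat.mod_eq_of_lt hp).symm
    · push_neg at hp
      rw [length_flatten_replicate, Nat.succ_mul] at h
      have hrest : p - B.length < (List.replicate q B).flatten.length := by
        rw [length_flatten_replicate]; omega
      rw [List.getElem_append_right hp, ih (p - B.length) hrest]
      congr 1
      exact (Nat.mod_eq_sub_mod hp).symm

lemma periodicWord_length (k m q : ℕ) : (periodicWord k m q).length = k * m * q := by
  unfold periodicWord
  rw [length_flatten_replicate, length_flatMap_replicate]
  simp [List.length_finRange]; ring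

lemma periodicWord_getElem (k m q : ℕ) (hm : 0 < m) (p : ℕ)
    (h : p < (periodicWord k m q).length) :
    ((periodicWord k m q)[p] : ℕ) = p / m % k := by
  have hBlen : ((List.finRange k).flatMap fun a => List.replicate m a).length = k * m := by
    rw [length_flatMap_replicate]; simp
  have hk : 0 < k := by
    rcases Nat.eq_zero_or_pos k with h0 | h0
    · subst h0; rw [periodicWord_length] at h; omega
    · exact h0
  have hBpos : 0 < ((List.finRange k).flatMap fun a => List.replicate m a).length := by
    rw [hBlen]; positivity
  unfold periodicWord at h ⊢
  rw [getElem_flatten_replicate _ hBpos q p h]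
  rw [getElem_flatMap_replicate m hm (List.finRange k) _ (Nat.mod_lt _ hBpos)
    (by rw [List.length_finRange]; rw [hBlen] at *; exact Nat.div_lt_of_lt_mul (by rw [mul_comm] at *; exact Nat.mod_lt _ hBpos))]
  rw [List.getElem_finRange]
  simp only [Fin.coe_cast]
  rw [hBlen, mul_comm k m, Nat.mod_mul_right_div_self]

lemma card_filter_succ (Pred : ℕ → Prop) [DecidablePred Pred] (j : ℕ) :
    ((Finset.range (j+1)).filter Pred).card
      = ((Finset.range j).filter Pred).card + if Pred j then 1 else 0 := by
  rw [Finset.range_add_one, Finset.filter_insert]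
  split
  · rw [Finset.card_insert_of_notMem (by simp)]
  · simp

lemma card_filter_range_mono (Pred : ℕ → Prop) [DecidablePred Pred] {j j' : ℕ} (h : j ≤ j') :
    ((Finset.range j).filter Pred).card ≤ ((Finset.range j').filter Pred).card :=
  Finset.card_le_card (Finset.filter_subset_filter _ (Finset.range_subset_range.mpr h))

lemma nat_key (k m t n N : ℕ) (hk : 2 ≤ k) (hm : 1 ≤ m)
    (f a : ℕ → ℕ)
    (hf : ∀ i, i + 1 < N → f i < f (i+1))
    (hfn : ∀ i, i < N → f i < n)
    (ha : ∀ i, i < N → a i < k * t)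
    (ham : ∀ i, i + 1 < N → a i ≤ a (i+1))
    (hres : ∀ i, i + 1 < N → a (i+1) = a i → f (i+1) / m % k = f i / m % k) :
    k * N ≤ n + k * k * m * t := by
  cases N with
  | zero => simp
  | succ N' =>
  set P : ℕ → Prop := fun i => a (i+1) = a i ∧ ¬ (f (i+1) / m = f i / m) with hP
  set Q : ℕ → Prop := fun i => ¬ (a (i+1) = a i) with hQ
  set R : ℕ → Prop := fun i => ¬ (a (i+1) = a i) ∨ ¬ (f (i+1) / m = f i / m) with hR
  have hjump : ∀ i, i < N' → P i → f i + m * k + 1 ≤ f (i+1) + m := by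
    intro i hi hPi
    have hi1 : i + 1 < N' + 1 := by omega
    have hlt : f i < f (i+1) := hf i hi1
    have hble : f i / m ≤ f (i+1) / m := Nat.div_le_div_right hlt.le
    have hbne : f i / m ≠ f (i+1) / m := fun h => hPi.2 h.symm
    have hmod : f (i+1) / m % k = f i / m % k := hres i hi1 hPi.1
    have hdvd : k ∣ f (i+1) / m - f i / m :=
      (Nat.modEq_iff_dvd' hble).mp hmod.symm
    have hbk : f i / m + k ≤ f (i+1) / m := by
      have hpos : f (i+1) / m - f i / m ≠ 0 := by omega
      have := Nat.le_of_dvd (by omega) hdvd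
      omega
    have d1 := Nat.div_add_mod (f i) m
    have d2 := Nat.div_add_mod (f (i+1)) m
    have hm1 : f i % m < m := Nat.mod_lt _ hm
    have hmul : m * (f i / m) + m * k ≤ m * (f (i+1) / m) := by
      calc m * (f i / m) + m * k = m * (f i / m + k) := by ring
        _ ≤ m * (f (i+1) / m) := Nat.mul_le_mul_left m hbk
    omega
  have claim1 : ∀ j, j ≤ N' →
      f 0 + j + m * k * ((Finset.range j).filter P).card
        ≤ f j + m * ((Finset.range j).filter P).card := by
    intro j
    induction j with
    | zero => simp
    | succ j ih =>
      intro hj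
      have ihj := ih (by omega)
      rw [card_filter_succ]
      by_cases hPj : P j
      · rw [if_pos hPj]
        have := hjump j (by omega) hPj
        have e1 : m * k * (((Finset.range j).filter P).card + 1)
            = m * k * ((Finset.range j).filter P).card + m * k := by ring
        have e2 : m * (((Finset.range j).filter P).card + 1)
            = m * ((Finset.range j).filter P).card + m := by ring
        omega
      · rw [if_neg hPj]
        simp only [Nat.add_zero]
        have := hf j (by omega)
        omega
  have claimA : ∀ j, j ≤ N' →
      ((Finset.range j).filter Q).card + a 0 ≤ a j := by
    intro j
    induction j with
    | zero => simp
    | succ j ih =>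
      intro hj
      have ihj := ih (by omega)
      rw [card_filter_succ]
      have hmono := ham j (by omega)
      by_cases hQj : Q j
      · rw [if_pos hQj]
        have : a j ≠ a (j+1) := fun h => hQj h.symm
        omega
      · rw [if_neg hQj]
        omega
  have hmono : ∀ j j', j < j' → j' ≤ N' → f j < f j' := by
    intro j j' hjj' hj'
    induction j' with
    | zero => omega
    | succ j' ih =>
      rcases Nat.lt_or_ge j j' with h | h
      · exact lt_trans (ih h (by omega)) (hf j' (by omega))
      · have : j = j' := by omega
        subst this
        exact hf j (by omega)
  have hconst : ∀ j j', j ≤ j' → j' ≤ N' →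
      ((Finset.range j).filter R).card = ((Finset.range j').filter R).card →
      f j / m = f j' / m := by
    intro j j' hjj' hj' hcard
    induction j' with
    | zero =>
      have : j = 0 := by omega
      subst this; rfl
    | succ j' ih =>
      rcases Nat.lt_or_ge j (j'+1) with h | h
      · have hj'' : j ≤ j' := by omega
        have hm1 : ((Finset.range j).filter R).card ≤ ((Finset.range j').filter R).card :=
          card_filter_range_mono R hj''
        have hsucc := card_filter_succ R j'
        by_cases hRj : R j'
        · rw [if_pos hRj] at hsucc; omega
        · rw [if_neg hRj] at hsucc
          have heq : f (j'+1) / m = f j' / m := by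
            by_contra hne
            exact hRj (Or.inr hne)
          rw [heq] at *
          exact ih hj'' (by omega) (by omega)
      · have : j = j' + 1 := by omega
        subst this; rfl
  have claim2 : N' + 1 ≤ m * (((Finset.range N').filter R).card + 1) := by
    have hcard := Finset.card_le_card_of_injOn
      (f := fun j => ((((Finset.range j).filter R).card : ℕ), f j % m))
      (s := Finset.range (N'+1))
      (t := (Finset.range (((Finset.range N').filter R).card + 1)) ×ˢ (Finset.range m))
      ?hmem ?hinj
    · simpa [mul_comm] using hcard
    case hmem =>
      intro j hj
      simp only [Finset.mem_coe, Finset.mem_range, Finset.mem_product] at *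
      constructor
      · have := card_filter_range_mono R (show j ≤ N' by omega)
        omega
      · exact Nat.mod_lt _ hm
    case hinj =>
      intro j hj j' hj' heq
      simp only [Finset.mem_coe, Finset.mem_range, Prod.mk.injEq] at *
      by_contra hne
      rcases Nat.lt_or_ge j j' with h | h
      · have hdiv := hconst j j' (by omega) (by omega) heq.1
        have hlt := hmono j j' h (by omega)
        have d1 := Nat.div_add_mod (f j) m
        have d2 := Nat.div_add_mod (f j') m
        have e : m * (f j / m) = m * (f j' / m) := by rw [hdiv]
        omega
      · have h' : j' < j := by omega
        have hdiv := hconst j' j (by omega) (by omega) heq.1.symm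
        have hlt := hmono j' j h' (by omega)
        have d1 := Nat.div_add_mod (f j) m
        have d2 := Nat.div_add_mod (f j') m
        have e : m * (f j / m) = m * (f j' / m) := by rw [hdiv]
        omega
  set C := ((Finset.range N').filter P).card with hC
  have hRsub : ((Finset.range N').filter R).card
      ≤ ((Finset.range N').filter Q).card + C := by
    have hsub : (Finset.range N').filter R ⊆
        ((Finset.range N').filter Q) ∪ ((Finset.range N').filter P) := by
      intro i hi
      simp only [Finset.mem_filter, Finset.mem_union, Finset.mem_range, hP, hQ, hR] at *
      tauto
    calc ((Finset.range N').filter R).card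
        ≤ (((Finset.range N').filter Q) ∪ ((Finset.range N').filter P)).card :=
          Finset.card_le_card hsub
      _ ≤ _ := Finset.card_union_le _ _
  have hQb : ((Finset.range N').filter Q).card + 1 ≤ k * t := by
    have h1 := claimA N' (le_refl _)
    have h2 := ha N' (by omega)
    omega
  have h1 : f 0 + N' + m * k * C ≤ f N' + m * C := claim1 N' (le_refl _)
  have hfN : f N' < n := hfn N' (by omega)
  have hstar : (N' + 1) + m * k * C ≤ n + m * C := by omega
  have h2 : N' + 1 ≤ m * k * t + m * C := by
    have hR1 : ((Finset.range N').filter R).card + 1 ≤ k * t + C := by omega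
    calc N' + 1 ≤ m * (((Finset.range N').filter R).card + 1) := claim2
      _ ≤ m * (k * t + C) := Nat.mul_le_mul_left m hR1
      _ = m * k * t + m * C := by ring
  obtain ⟨e, he⟩ : ∃ e, k = e + 1 := ⟨k - 1, by omega⟩
  have h3 : (N' + 1) + m * e * C ≤ n := by
    have : m * k * C = m * e * C + m * C := by rw [he]; ring
    omega
  have hfin : e * (m * k * t + m * C) = e * m * k * t + m * e * C := by ring
  have hlast : e * m * k * t ≤ k * k * m * t := by
    calc e * m * k * t ≤ k * m * k * t :=
      Nat.mul_le_mul_right t (Nat.mul_le_mul_right k (Nat.mul_le_mul_right m (by omega)))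
      _ = k * k * m * t := by ring
  calc k * (N' + 1) = (N' + 1) + e * (N' + 1) := by rw [he]; ring
    _ ≤ (N' + 1) + e * (m * k * t + m * C) :=
        Nat.add_le_add_left (Nat.mul_le_mul_left e h2) _
    _ = ((N' + 1) + m * e * C) + e * m * k * t := by rw [hfin]; ring
    _ ≤ n + e * m * k * t := by omega
    _ ≤ n + k * k * m * t := by omega

lemma sublist_struct {k : ℕ} {l w : List (Fin k)} (h : l.Sublist w) :
    ∃ f : ℕ → ℕ, (∀ i, i + 1 < l.length → f i < f (i+1)) ∧
      (∀ i, i < l.length → f i < w.length) ∧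
      (∀ (i : ℕ) (hi : i < l.length) (hw : f i < w.length), l[i]'hi = w[f i]'hw) := by
  obtain ⟨is, hmap, hpw⟩ := List.sublist_eq_map_getElem h
  have hlen : l.length = is.length := by rw [hmap, List.length_map]
  refine ⟨fun i => if h : i < is.length then (is[i] : ℕ) else 0, ?_, ?_, ?_⟩
  · intro i hi
    have h1 : i < is.length := by omega
    have h2 : i + 1 < is.length := by omega
    simp only [dif_pos h1, dif_pos h2]
    have := List.pairwise_iff_getElem.mp hpw i (i+1) h1 h2 (by omega)
    exact_mod_cast this
  · intro i hi
    have h1 : i < is.length := by omega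
    simp only [dif_pos h1]
    exact (is[i]).isLt
  · intro i hi hw
    have h1 : i < is.length := by omega
    simp only [dif_pos h1] at hw ⊢
    simp only [hmap, List.getElem_map]
    rfl

/-- Let `k ≥ 2` and let `m, M, s, t` be positive integers with
`k·m·s = k·M·t = n` and `m ≤ M`.  Let `u = (1^m 2^m ⋯ k^m)^s` and `v = (1^M 2^M ⋯ k^M)^t`.
Then `LCS(u, v) ≤ n/k + (m/M)·n`, and likewise `LCS(u, rev(v)) ≤ n/k + (m/M)·n`. -/
theorem lcs_periodic_words_upper_bound (k m M s t n : ℕ) (hk : 2 ≤ k)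
    (hm : 1 ≤ m) (hM : 1 ≤ M) (hs : 1 ≤ s) (ht : 1 ≤ t)
    (hms : k * m * s = n) (hMt : k * M * t = n) (hmM : m ≤ M) :
    (∀ l : List (Fin k), l.Sublist (periodicWord k m s) → l.Sublist (periodicWord k M t) →
        (l.length : ℝ) ≤ (n : ℝ) / (k : ℝ) + ((m : ℝ) / (M : ℝ)) * (n : ℝ)) ∧
    (∀ l : List (Fin k), l.Sublist (periodicWord k m s) →
        l.Sublist (periodicWord k M t).reverse →
        (l.length : ℝ) ≤ (n : ℝ) / (k : ℝ) + ((m : ℝ) / (M : ℝ)) * (n : ℝ)) := by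
  have hulen : (periodicWord k m s).length = n := by rw [periodicWord_length, hms]
  have hvlen : (periodicWord k M t).length = n := by rw [periodicWord_length, hMt]
  have hn1 : 1 ≤ n := by
    rw [← hms]
    calc 1 = 1 * 1 * 1 := by norm_num
      _ ≤ k * m * s := Nat.mul_le_mul (Nat.mul_le_mul (by omega) hm) hs
  have hnM : n = M * (k * t) := by rw [← hMt]; ring
  have hkR : (0:ℝ) < (k:ℝ) := by exact_mod_cast (by omega : 0 < k)
  have hMR : (0:ℝ) < (M:ℝ) := by exact_mod_cast hM
  have hcast : ((M * t + k * m * t : ℕ) : ℝ)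
      = (n : ℝ) / (k : ℝ) + ((m : ℝ) / (M : ℝ)) * (n : ℝ) := by
    have hn' : (n : ℝ) = (k : ℝ) * (M : ℝ) * (t : ℝ) := by exact_mod_cast hMt.symm
    rw [hn']
    push_cast
    field_simp
  have hfinal : ∀ N : ℕ, k * N ≤ n + k * k * m * t →
      (N : ℝ) ≤ (n : ℝ) / (k : ℝ) + ((m : ℝ) / (M : ℝ)) * (n : ℝ) := by
    intro N hN
    have he : k * (M * t + k * m * t) = n + k * k * m * t := by rw [← hMt]; ring
    have hNle : N ≤ M * t + k * m * t :=
      Nat.le_of_mul_le_mul_left (by omega) (by omega : 0 < k)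
    rw [← hcast]
    exact_mod_cast hNle
  constructor
  · intro l h1 h2
    obtain ⟨f, hfmono, hflt, hfget⟩ := sublist_struct h1
    obtain ⟨g, hgmono, hglt, hgget⟩ := sublist_struct h2
    set N := l.length with hN
    have hletter : ∀ i, i < N → f i / m % k = g i / M % k := by
      intro i hi
      have hfi : f i < (periodicWord k m s).length := hflt i hi
      have hgi : g i < (periodicWord k M t).length := hglt i hi
      have e1 := hfget i hi hfi
      have e2 := hgget i hi hgi
      have v1 := periodicWord_getElem k m s hm (f i) hfi
      have v2 := periodicWord_getElem k M t hM (g i) hgi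
      rw [← v1, ← v2, ← e1, ← e2]
    apply hfinal N
    apply nat_key k m t n N hk hm f (fun i => g i / M)
    · exact hfmono
    · intro i hi; rw [← hulen]; exact hflt i hi
    · intro i hi
      have : g i < M * (k * t) := by rw [← hnM, ← hvlen]; exact hglt i hi
      exact Nat.div_lt_of_lt_mul this
    · intro i hi
      exact Nat.div_le_div_right (hgmono i hi).le
    · intro i hi haeq
      rw [hletter (i+1) hi, hletter i (by omega), haeq]
  · intro l h1 h2
    obtain ⟨f, hfmono, hflt, hfget⟩ := sublist_struct h1
    obtain ⟨g, hgmono, hglt, hgget⟩ := sublist_struct h2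
    set N := l.length with hN
    have hwlen : (periodicWord k M t).reverse.length = n := by
      rw [List.length_reverse, hvlen]
    have hgn : ∀ i, i < N → g i < n := by
      intro i hi; rw [← hwlen]; exact hglt i hi
    have hletter : ∀ i, i < N → f i / m % k = (n - 1 - g i) / M % k := by
      intro i hi
      have hfi : f i < (periodicWord k m s).length := hflt i hi
      have hgi : g i < (periodicWord k M t).reverse.length := hglt i hi
      have e1 := hfget i hi hfi
      have e2 := hgget i hi hgi
      rw [List.getElem_reverse] at e2
      have hgn' : g i < n := hgn i hi
      have hidx : (periodicWord k M t).length - 1 - g i < (periodicWord k M t).length := by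
        rw [hvlen]; omega
      have v1 := periodicWord_getElem k m s hm (f i) hfi
      have v2 := periodicWord_getElem k M t hM _ hidx
      have hx : f i / m % k = ((periodicWord k M t).length - 1 - g i) / M % k := by
        rw [← v1, ← v2, ← e1]
        exact congrArg Fin.val e2
      rw [hvlen] at hx
      exact hx
    have hq : ∀ i, i < N → (n - 1 - g i) / M ≤ k * t - 1 := by
      intro i hi
      have h1 : n - 1 - g i < M * (k * t) := by omega
      have := Nat.div_lt_of_lt_mul h1
      omega
    apply hfinal N
    apply nat_key k m t n N hk hm f (fun i => k * t - 1 - (n - 1 - g i) / M)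
    · exact hfmono
    · intro i hi; rw [← hulen]; exact hflt i hi
    · intro i hi
      show k * t - 1 - (n - 1 - g i) / M < k * t
      have h1kt : 1 ≤ k * t := Nat.one_le_iff_ne_zero.mpr (Nat.mul_ne_zero (by omega) (by omega))
      generalize hkt : k * t = T at h1kt ⊢
      generalize hd : (n - 1 - g i) / M = D
      omega
    · intro i hi
      show k * t - 1 - (n - 1 - g i) / M ≤ k * t - 1 - (n - 1 - g (i+1)) / M
      have hg : g i < g (i+1) := hgmono i hi
      have hle : (n - 1 - g (i+1)) / M ≤ (n - 1 - g i) / M :=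
        Nat.div_le_div_right (by omega)
      have := hq i (by omega)
      have := hq (i+1) hi
      omega
    · intro i hi haeq
      have haeq' : k * t - 1 - (n - 1 - g (i+1)) / M = k * t - 1 - (n - 1 - g i) / M := haeq
      have hb1 := hq i (by omega)
      have hb2 := hq (i+1) hi
      have hqe : (n - 1 - g (i+1)) / M = (n - 1 - g i) / M := by
        generalize hkt : k * t = T at haeq' hb1 hb2
        generalize hd1 : (n - 1 - g (i+1)) / M = D1 at haeq' hb2 ⊢
        generalize hd2 : (n - 1 - g i) / M = D2 at haeq' hb1 ⊢
        omega

      rw [hletter (i+1) hi, hletter i (by omega), hqe]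
end

section
/- Let w be a binary word, let t ≥ 0 be a real number, and index the zeros of w as z_1, z_2, … from left to right. Call the zero z_j t-good if |P(z_j) − j| ≤ t, where P(z_j) is the number of ones of w to the left of z_j. Then every contiguous subword of w that contains exactly N ones contains at most N + 2t + 1 zeros that are t-good. -/
/-- Let `w` be a binary word (`false` = zero, `true` = one) and `t ≥ 0`
a real number.  The zero of `w` sitting at position `p` (0-indexed) is the `j`-th zero of
`w` with `j = (number of zeros among the first p symbols) + 1`, and `P(z_j)` is the number
of ones among the first `p` symbols.  Call it `t`-good if `|P(z_j) - j| ≤ t`.  Then every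
contiguous subword of `w` (here, the block of symbols at positions `a ≤ p < b`) that
contains exactly `N` ones contains at most `N + 2t + 1` zeros that are `t`-good. -/
theorem good_zeros_in_subword (w : List Bool) (t : ℝ) (ht : 0 ≤ t)
    (a b N : ℕ) (hab : a ≤ b) (hb : b ≤ w.length)
    (hN : ((w.take b).drop a).count true = N) :
    (({p : ℕ | a ≤ p ∧ p < b ∧ w.getD p true = false ∧
        |((w.take p).count true : ℝ) - (((w.take p).count false : ℝ) + 1)| ≤ t}.ncard : ℝ))
      ≤ (N : ℝ) + 2 * t + 1 := by
  set S : Set ℕ := {p : ℕ | a ≤ p ∧ p < b ∧ w.getD p true = false ∧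
        |((w.take p).count true : ℝ) - (((w.take p).count false : ℝ) + 1)| ≤ t} with hS
  set f : ℕ → ℕ := fun p => (w.take p).count false with hf
  set c : ℕ := (w.take a).count true with hc
  set lo : ℝ := (c : ℝ) - 1 - t with hlo
  set hi : ℝ := (c : ℝ) + N - 1 + t with hhi
  -- ones count bounds for p ∈ [a, b)
  have hO : ∀ p ∈ S, (c : ℝ) ≤ ((w.take p).count true : ℝ) ∧
      ((w.take p).count true : ℝ) ≤ (c : ℝ) + N := by
    intro p hp
    obtain ⟨hap, hpb, -, -⟩ := hp
    have hsplit : (w.take p) = w.take a ++ (w.take p).drop a := by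
      conv_lhs => rw [← List.take_append_drop a (w.take p)]
      rw [List.take_take, min_eq_left hap]
    have hcnt : (w.take p).count true = c + ((w.take p).drop a).count true := by
      conv_lhs => rw [hsplit]
      rw [List.count_append]
    have hmid : ((w.take p).drop a).count true ≤ N := by
      rw [← hN]
      apply List.Sublist.count_le
      rw [List.drop_take, List.drop_take]
      have : List.take (p - a) (List.drop a w)
          = List.take (p - a) (List.take (b - a) (List.drop a w)) := by
        rw [List.take_take, min_eq_left (by omega)]
      rw [this]
      exact List.take_sublist _ _
    constructor
    · rw [hcnt]; push_cast; linarith [Nat.zero_le (((w.take p).drop a).count true)]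
    · rw [hcnt]; push_cast
      have : (((w.take p).drop a).count true : ℝ) ≤ (N : ℝ) := by exact_mod_cast hmid
      linarith
  -- bounds on f p for p ∈ S
  have hfb : ∀ p ∈ S, lo ≤ (f p : ℝ) ∧ (f p : ℝ) ≤ hi := by
    intro p hp
    obtain ⟨h1, h2⟩ := hO p hp
    have habs := hp.2.2.2
    rw [abs_le] at habs
    constructor
    · simp only [hlo]; linarith [habs.1]
    · simp only [hhi]; linarith [habs.2]
  -- f is strictly increasing on S
  have hmono : ∀ p ∈ S, ∀ q ∈ S, p < q → f p < f q := by
    intro p hp q hq hpq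
    have hplen : p < w.length := lt_of_lt_of_le hp.2.1 hb
    have hget : w[p] = false := by
      have := hp.2.2.1
      rwa [List.getD_eq_getElem w true hplen] at this
    have hstep : f (p + 1) = f p + 1 := by
      simp only [hf]
      rw [List.take_succ, List.getElem?_eq_getElem hplen, hget]
      simp [List.count_append]
    have hle : f (p + 1) ≤ f q := by
      simp only [hf]
      apply List.Sublist.count_le
      have : w.take (p+1) = (w.take q).take (p+1) := by
        rw [List.take_take, min_eq_left (by omega)]
      rw [this]
      exact List.take_sublist _ _
    omega
  have hinj : Set.InjOn f S := by
    intro p hp q hq hpq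
    by_contra hne
    rcases lt_or_gt_of_ne hne with h | h
    · exact absurd hpq (Nat.ne_of_lt (hmono p hp q hq h))
    · exact absurd hpq.symm (Nat.ne_of_lt (hmono q hq p hp h))
  -- S is finite
  have hfin : S.Finite := (Set.finite_Ico a b).subset (fun p hp => ⟨hp.1, hp.2.1⟩)
  -- image is contained in an integer interval
  have himg : f '' S ⊆ ↑(Finset.Icc ⌈lo⌉₊ ⌊hi⌋₊) := by
    rintro z ⟨p, hp, rfl⟩
    obtain ⟨h1, h2⟩ := hfb p hp
    simp only [Finset.coe_Icc, Set.mem_Icc]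
    exact ⟨Nat.ceil_le.mpr h1, Nat.le_floor h2⟩
  have hcard : S.ncard ≤ ⌊hi⌋₊ + 1 - ⌈lo⌉₊ := by
    rw [← Set.ncard_image_of_injOn hinj]
    calc (f '' S).ncard ≤ (↑(Finset.Icc ⌈lo⌉₊ ⌊hi⌋₊) : Set ℕ).ncard :=
          Set.ncard_le_ncard himg (Finset.finite_toSet _)
      _ = ⌊hi⌋₊ + 1 - ⌈lo⌉₊ := by rw [Set.ncard_coe_finset, Nat.card_Icc]
  have hdiff : hi - lo = (N : ℝ) + 2 * t := by simp only [hhi, hlo]; ring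
  have hfinal : ((⌊hi⌋₊ + 1 - ⌈lo⌉₊ : ℕ) : ℝ) ≤ (N : ℝ) + 2 * t + 1 := by
    by_cases hcl : ⌈lo⌉₊ ≤ ⌊hi⌋₊
    · by_cases h0 : 0 ≤ hi
      · have h1 : (⌊hi⌋₊ : ℝ) ≤ hi := Nat.floor_le h0
        have h2 : lo ≤ (⌈lo⌉₊ : ℝ) := Nat.le_ceil lo
        have : ((⌊hi⌋₊ + 1 - ⌈lo⌉₊ : ℕ) : ℝ) = (⌊hi⌋₊ : ℝ) + 1 - (⌈lo⌉₊ : ℝ) := by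
          have : ⌈lo⌉₊ ≤ ⌊hi⌋₊ + 1 := by omega
          push_cast [Nat.cast_sub this]; ring
        rw [this]
        linarith
      · have : ⌊hi⌋₊ = 0 := Nat.floor_eq_zero.mpr (by linarith)
        have h2 : ⌈lo⌉₊ = 0 := by omega
        rw [this, h2]
        norm_num
        positivity
    · have : ⌊hi⌋₊ + 1 - ⌈lo⌉₊ = 0 := by omega
      rw [this]
      norm_num
      positivity
  calc (S.ncard : ℝ) ≤ ((⌊hi⌋₊ + 1 - ⌈lo⌉₊ : ℕ) : ℝ) := by exact_mod_cast hcard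
    _ ≤ (N : ℝ) + 2 * t + 1 := hfinal
end

section
/- Let n be even and let w and w′ be balanced binary words of length n, each with zeros indexed z_1, …, z_{n/2} from left to right. Let j ≥ 1 and let t ≥ 0 be an integer with t ≤ j. If in both w and w′ the number of ones to the left of the j-th zero is at most j − t (both j-th zeros are 'left-bad by t'), then w and w′ have a common subsequence of length at least n/2 + t. Symmetrically, if in both w and w′ the number of ones to the left of the j-th zero is at least j + t, then w and w′ have a common subsequence of length at least n/2 + t. -/
/-- `onesBeforeZero w j` is the number of ones (`true`s) of the binary word `w` strictly to
the left of the `j`-th zero (`false`) of `w`, zeros being counted from the left starting at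
`j = 1`.  (If `w` has fewer than `j` zeros, it is the total number of ones of `w`.) -/
def onesBeforeZero : List Bool → ℕ → ℕ
  | [], _ => 0
  | true :: rest, j => onesBeforeZero rest j + 1
  | false :: rest, j => if j ≤ 1 then 0 else onesBeforeZero rest (j - 1)

lemma lemA : ∀ (w : List Bool) (j : ℕ), 1 ≤ j → j ≤ w.count false →
    (List.replicate j false ++ List.replicate (w.count true - onesBeforeZero w j) true).Sublist w := by
  intro w
  induction w with
  | nil => intro j hj hc; simp at hc; omega
  | cons a rest ih =>
    intro j hj hc
    cases a with
    | true =>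
      have h := ih j hj (by simpa using hc)
      have e1 : (true :: rest).count true = rest.count true + 1 := by simp
      have e2 : onesBeforeZero (true :: rest) j = onesBeforeZero rest j + 1 := rfl
      rw [e1, e2]
      have : rest.count true + 1 - (onesBeforeZero rest j + 1) = rest.count true - onesBeforeZero rest j := by omega
      rw [this]
      exact h.cons _
    | false =>
      by_cases hj1 : j = 1
      · subst hj1
        have e2 : onesBeforeZero (false :: rest) 1 = 0 := rfl
        have e1 : (false :: rest).count true = rest.count true := by simp
        rw [e1, e2, Nat.sub_zero]
        simp only [List.replicate_one, List.cons_append, List.nil_append]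
        exact (List.replicate_sublist_iff.mpr le_rfl).cons₂ _
      · have hj2 : 2 ≤ j := by omega
        have e2 : onesBeforeZero (false :: rest) j = onesBeforeZero rest (j - 1) := by
          simp [onesBeforeZero]; omega
        have hc' : j - 1 ≤ rest.count false := by simp at hc; omega
        have h := ih (j - 1) (by omega) hc'
        have e1 : (false :: rest).count true = rest.count true := by simp
        rw [e1, e2]
        have : List.replicate j false = false :: List.replicate (j-1) false := by
          rw [← List.replicate_succ]; congr 1; omega
        rw [this]
        exact h.cons₂ _

lemma lemB : ∀ (w : List Bool) (j m : ℕ), 1 ≤ j → j ≤ w.count false →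
    m ≤ onesBeforeZero w j →
    (List.replicate m true ++ List.replicate (w.count false - j + 1) false).Sublist w := by
  intro w
  induction w with
  | nil => intro j m hj hc _; simp at hc; omega
  | cons a rest ih =>
    intro j m hj hc hm
    cases a with
    | true =>
      have e2 : onesBeforeZero (true :: rest) j = onesBeforeZero rest j + 1 := rfl
      have e1 : (true :: rest).count false = rest.count false := by simp
      rw [e1]
      cases m with
      | zero =>
        have h := ih j 0 hj (by simpa using hc) (Nat.zero_le _)
        simpa using (by simpa using h : (List.replicate (rest.count false - j + 1) false).Sublist rest).cons _
      | succ m =>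
        have h := ih j m hj (by simpa using hc) (by rw [e2] at hm; omega)
        rw [List.replicate_succ]
        exact h.cons₂ _
    | false =>
      by_cases hj1 : j = 1
      · subst hj1
        have e2 : onesBeforeZero (false :: rest) 1 = 0 := rfl
        rw [e2] at hm
        have hm0 : m = 0 := by omega
        subst hm0
        have e1 : (false :: rest).count false = rest.count false + 1 := by simp
        rw [e1]
        have : rest.count false + 1 - 1 + 1 = rest.count false + 1 := by omega
        rw [this, List.replicate_succ]
        simp only [List.replicate, List.nil_append]
        exact (List.replicate_sublist_iff.mpr le_rfl).cons₂ _
      · have hj2 : 2 ≤ j := by omega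
        have e2 : onesBeforeZero (false :: rest) j = onesBeforeZero rest (j - 1) := by
          simp [onesBeforeZero]; omega
        have hc' : j - 1 ≤ rest.count false := by simp at hc; omega
        have h := ih (j - 1) m (by omega) hc' (by rw [e2] at hm; exact hm)
        have e1 : (false :: rest).count false = rest.count false + 1 := by simp
        rw [e1]
        have : rest.count false + 1 - j + 1 = rest.count false - (j - 1) + 1 := by omega
        rw [this]
        exact h.cons _

/-- Let `n` be even and let `w, w'` be balanced binary words of length
`n`.  Let `1 ≤ j ≤ n/2` and let `0 ≤ t ≤ j` be an integer.  If in both `w` and `w'` the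
number of ones to the left of the `j`-th zero is at most `j - t`, then `w` and `w'` have
a common subsequence of length at least `n/2 + t`; symmetrically, if in both words that
number is at least `j + t`, the same conclusion holds. -/
theorem bad_zeros_give_long_lcs (n : ℕ) (hn : 2 ∣ n) (w w' : List Bool)
    (hw : w.length = n ∧ w.count false = n / 2 ∧ w.count true = n / 2)
    (hw' : w'.length = n ∧ w'.count false = n / 2 ∧ w'.count true = n / 2)
    (j t : ℕ) (hj : 1 ≤ j) (hjn : j ≤ n / 2) (ht : t ≤ j) :
    ((onesBeforeZero w j ≤ j - t ∧ onesBeforeZero w' j ≤ j - t) →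
      ∃ s : List Bool, s.Sublist w ∧ s.Sublist w' ∧ n / 2 + t ≤ s.length) ∧
    ((j + t ≤ onesBeforeZero w j ∧ j + t ≤ onesBeforeZero w' j) →
      ∃ s : List Bool, s.Sublist w ∧ s.Sublist w' ∧ n / 2 + t ≤ s.length) := by
  obtain ⟨hl, hf, htr⟩ := hw
  obtain ⟨hl', hf', htr'⟩ := hw'
  constructor
  · rintro ⟨h1, h2⟩
    refine ⟨List.replicate j false ++ List.replicate (n / 2 - (j - t)) true, ?_, ?_, ?_⟩
    · refine List.Sublist.trans ?_ (lemA w j hj (by omega))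
      exact (List.Sublist.refl _).append
        ((List.replicate_sublist_replicate true).mpr (by omega))
    · refine List.Sublist.trans ?_ (lemA w' j hj (by omega))
      exact (List.Sublist.refl _).append
        ((List.replicate_sublist_replicate true).mpr (by omega))
    · simp; omega
  · rintro ⟨h1, h2⟩
    refine ⟨List.replicate (j + t) true ++ List.replicate (n / 2 - j + 1) false, ?_, ?_, ?_⟩
    · have := lemB w j (j + t) hj (by omega) h1
      rwa [hf] at this
    · have := lemB w' j (j + t) hj (by omega) h2
      rwa [hf'] at this
    · simp; omega
end

section
/- Let A and B be finite sets of integers, let c ≥ 0 be an integer, and let E = {(a,b) ∈ A × B : |a − b| ≤ c}. Suppose that every a ∈ A belongs to at most d pairs of E and every b ∈ B belongs to at most d pairs of E, where d ≥ 1. Then there exist an integer m ≥ |E|/(2d) and pairs (a_1,b_1), …, (a_m,b_m) ∈ E with a_1 < a_2 < ⋯ < a_m and b_1 < b_2 < ⋯ < b_m. -/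
/-- Auxiliary lemma: by strong induction on the cardinality of a subset `S ⊆ E`,
we extract a monotone chain of edges of `E` of length `m` with `|S| ≤ 2dm`,
staying strictly above given lower bounds `x`, `y`. -/
lemma monotone_matching_aux (E : Finset (ℤ × ℤ)) (d : ℕ)
    (hclose : ∀ p ∈ E, ∀ q ∈ E, q.1 ≤ p.1 → p.2 ≤ q.2 → (q.1, p.2) ∈ E)
    (hdA : ∀ a : ℤ, (E.filter fun p => p.1 = a).card ≤ d)
    (hdB : ∀ b : ℤ, (E.filter fun p => p.2 = b).card ≤ d) :
    ∀ n : ℕ, ∀ S : Finset (ℤ × ℤ), S.card = n → S ⊆ E → ∀ x y : ℤ,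
      (∀ p ∈ S, x < p.1 ∧ y < p.2) →
      ∃ m : ℕ, n ≤ 2 * d * m ∧ ∃ f : Fin m → ℤ × ℤ,
        (∀ i, f i ∈ E ∧ x < (f i).1 ∧ y < (f i).2) ∧
        StrictMono (fun i => (f i).1) ∧ StrictMono (fun i => (f i).2) := by
  intro n
  induction n using Nat.strong_induction_on with
  | _ n IH =>
    intro S hcard hSE x y hxy
    rcases S.eq_empty_or_nonempty with rfl | hS
    · refine ⟨0, by simp [← hcard], fun i => i.elim0, fun i => i.elim0, ?_, ?_⟩ <;>
        exact fun i => i.elim0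
    · have himg : (S.image Prod.fst).Nonempty := hS.image _
      set a := (S.image Prod.fst).min' himg with ha
      obtain ⟨p₀, hp₀S, hp₀a⟩ := Finset.mem_image.mp ((S.image Prod.fst).min'_mem himg)
      set T := E.filter (fun p => p.1 = a ∧ y < p.2) with hT
      have hTne : T.Nonempty :=
        ⟨p₀, Finset.mem_filter.mpr ⟨hSE hp₀S, hp₀a, (hxy p₀ hp₀S).2⟩⟩
      have hTimg : (T.image Prod.snd).Nonempty := hTne.image _
      set b := (T.image Prod.snd).min' hTimg with hb
      obtain ⟨q₀, hq₀T, hq₀b⟩ := Finset.mem_image.mp ((T.image Prod.snd).min'_mem hTimg)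
      have hq₀ := Finset.mem_filter.mp hq₀T
      have habE : (a, b) ∈ E := by
        have hq : q₀ = (a, b) := Prod.ext hq₀.2.1 hq₀b
        rw [← hq]; exact hq₀.1
      have hyb : y < b := lt_of_lt_of_eq hq₀.2.2 hq₀b
      have hxa : x < a := lt_of_lt_of_eq (hxy p₀ hp₀S).1 hp₀a
      set S' := S.filter (fun p => ¬(p.1 = a ∨ p.2 = b)) with hS'
      have hS'prop : ∀ p ∈ S', a < p.1 ∧ b < p.2 := by
        intro p hp
        rw [hS', Finset.mem_filter] at hp
        obtain ⟨hpS, hpne⟩ := hp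
        push_neg at hpne
        have h1 : a ≤ p.1 := Finset.min'_le _ _ (Finset.mem_image_of_mem _ hpS)
        have h2 : b < p.2 := by
          by_contra h
          push_neg at h
          have hE' : (a, p.2) ∈ E := hclose p (hSE hpS) (a, b) habE h1 h
          have hmem : (a, p.2) ∈ T := by
            rw [hT, Finset.mem_filter]
            exact ⟨hE', rfl, (hxy p hpS).2⟩
          have := Finset.min'_le _ _ (Finset.mem_image_of_mem Prod.snd hmem)
          exact hpne.2 (le_antisymm h this)
        exact ⟨lt_of_le_of_ne h1 (Ne.symm hpne.1), h2⟩
      have hsplit : S.card = (S.filter (fun p => p.1 = a ∨ p.2 = b)).card + S'.card := by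
        rw [hS']
        exact (Finset.card_filter_add_card_filter_not
          (s := S) (p := fun q => q.1 = a ∨ q.2 = b)).symm
      have hbound : (S.filter (fun p => p.1 = a ∨ p.2 = b)).card ≤ 2 * d := by
        have hsub : S.filter (fun p => p.1 = a ∨ p.2 = b) ⊆
            (E.filter fun p => p.1 = a) ∪ (E.filter fun p => p.2 = b) := by
          intro p hp
          rw [Finset.mem_filter] at hp
          rcases hp.2 with h | h
          · exact Finset.mem_union_left _ (Finset.mem_filter.mpr ⟨hSE hp.1, h⟩)
          · exact Finset.mem_union_right _ (Finset.mem_filter.mpr ⟨hSE hp.1, h⟩)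
        calc (S.filter (fun p => p.1 = a ∨ p.2 = b)).card
            ≤ ((E.filter fun p => p.1 = a) ∪ (E.filter fun p => p.2 = b)).card :=
              Finset.card_le_card hsub
          _ ≤ (E.filter fun p => p.1 = a).card + (E.filter fun p => p.2 = b).card :=
              Finset.card_union_le _ _
          _ ≤ d + d := Nat.add_le_add (hdA a) (hdB b)
          _ = 2 * d := by ring
      have hS'lt : S'.card < n := by
        rw [← hcard]
        apply Finset.card_lt_card
        rw [Finset.ssubset_iff_of_subset (Finset.filter_subset _ _)]
        exact ⟨p₀, hp₀S, by simp [hS', hp₀a, ha]⟩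
      obtain ⟨m', hm', f', hf', hf1, hf2⟩ :=
        IH S'.card hS'lt S' rfl ((Finset.filter_subset _ _).trans hSE) a b hS'prop
      have hmono : ∀ (g : ℤ × ℤ → ℤ), StrictMono (fun i => g (f' i)) →
          (∀ i, g (a, b) < g (f' i)) →
          StrictMono (fun i : Fin (m' + 1) => g (Fin.cons (α := fun _ => ℤ × ℤ) (a, b) f' i)) := by
        intro g hg hlt i j hij
        rcases Fin.eq_zero_or_eq_succ j with rfl | ⟨j', rfl⟩
        · exact absurd hij (not_lt.mpr (Fin.zero_le i))
        · rcases Fin.eq_zero_or_eq_succ i with rfl | ⟨i', rfl⟩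
          · simpa using hlt j'
          · simpa using hg (Fin.succ_lt_succ_iff.mp hij)
      refine ⟨m' + 1, ?_, Fin.cons (a, b) f', ?_, ?_, ?_⟩
      · have h1 : n ≤ 2 * d + S'.card := by omega
        calc n ≤ 2 * d + S'.card := h1
          _ ≤ 2 * d + 2 * d * m' := Nat.add_le_add_left hm' _
          _ = 2 * d * (m' + 1) := by ring
      · intro i
        rcases Fin.eq_zero_or_eq_succ i with rfl | ⟨i', rfl⟩
        · simpa using ⟨habE, hxa, hyb⟩
        · simp only [Fin.cons_succ]
          exact ⟨(hf' i').1, lt_trans hxa (hf' i').2.1, lt_trans hyb (hf' i').2.2⟩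
      · exact hmono Prod.fst hf1 (fun i => (hf' i).2.1)
      · exact hmono Prod.snd hf2 (fun i => (hf' i).2.2)

/-- Let `A` and `B` be finite sets of integers, `c ≥ 0` an integer, and
`E = {(a,b) ∈ A × B : |a - b| ≤ c}`.  Suppose every `a ∈ A` belongs to at most `d` pairs of
`E` and every `b ∈ B` belongs to at most `d` pairs of `E`, where `d ≥ 1`.  Then there exist
an integer `m ≥ |E|/(2d)` and pairs `(a_1,b_1), …, (a_m,b_m) ∈ E` with
`a_1 < a_2 < ⋯ < a_m` and `b_1 < b_2 < ⋯ < b_m`. -/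
theorem monotone_matching_of_close_pairs (A B : Finset ℤ) (c : ℤ) (hc : 0 ≤ c)
    (d : ℕ) (hd : 1 ≤ d) (E : Finset (ℤ × ℤ))
    (hE : E = (A ×ˢ B).filter fun p => |p.1 - p.2| ≤ c)
    (hA : ∀ a ∈ A, (E.filter fun p => p.1 = a).card ≤ d)
    (hB : ∀ b ∈ B, (E.filter fun p => p.2 = b).card ≤ d) :
    ∃ m : ℕ, (E.card : ℝ) / (2 * (d : ℝ)) ≤ (m : ℝ) ∧
      ∃ f : Fin m → ℤ × ℤ, (∀ i, f i ∈ E) ∧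
        StrictMono (fun i => (f i).1) ∧ StrictMono (fun i => (f i).2) := by
  have hclose : ∀ p ∈ E, ∀ q ∈ E, q.1 ≤ p.1 → p.2 ≤ q.2 → (q.1, p.2) ∈ E := by
    intro p hp q hq h1 h2
    rw [hE, Finset.mem_filter, Finset.mem_product] at *
    obtain ⟨⟨hpA, hpB⟩, hpc⟩ := hp
    obtain ⟨⟨hqA, hqB⟩, hqc⟩ := hq
    refine ⟨⟨hqA, hpB⟩, ?_⟩
    rw [abs_le] at *
    constructor <;> simp <;> linarith
  have hdA : ∀ a : ℤ, (E.filter fun p => p.1 = a).card ≤ d := by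
    intro a
    by_cases hA' : a ∈ A
    · exact hA a hA'
    · have h0 : E.filter (fun p => p.1 = a) = ∅ := by
        rw [Finset.filter_eq_empty_iff]
        intro p hp h
        apply hA'
        rw [hE, Finset.mem_filter, Finset.mem_product] at hp
        exact h ▸ hp.1.1
      simp [h0]
  have hdB : ∀ b : ℤ, (E.filter fun p => p.2 = b).card ≤ d := by
    intro b
    by_cases hB' : b ∈ B
    · exact hB b hB'
    · have h0 : E.filter (fun p => p.2 = b) = ∅ := by
        rw [Finset.filter_eq_empty_iff]
        intro p hp h
        apply hB'
        rw [hE, Finset.mem_filter, Finset.mem_product] at hp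
        exact h ▸ hp.1.2
      simp [h0]
  have hdpos : (0 : ℝ) < 2 * (d : ℝ) := by
    have : (1 : ℝ) ≤ (d : ℝ) := by exact_mod_cast hd
    linarith
  rcases E.eq_empty_or_nonempty with hEe | hEne
  · refine ⟨0, by simp [hEe], fun i => i.elim0, fun i => i.elim0, ?_, ?_⟩ <;>
      exact fun i => i.elim0
  · have hx : (E.image Prod.fst).Nonempty := hEne.image _
    have hy : (E.image Prod.snd).Nonempty := hEne.image _
    set x := (E.image Prod.fst).min' hx - 1 with hxdef
    set y := (E.image Prod.snd).min' hy - 1 with hydef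
    have hxy : ∀ p ∈ E, x < p.1 ∧ y < p.2 := by
      intro p hp
      constructor
      · have := Finset.min'_le _ _ (Finset.mem_image_of_mem Prod.fst hp)
        omega
      · have := Finset.min'_le _ _ (Finset.mem_image_of_mem Prod.snd hp)
        omega
    obtain ⟨m, hm, f, hf, h1, h2⟩ :=
      monotone_matching_aux E d hclose hdA hdB E.card E rfl (le_refl _) x y hxy
    refine ⟨m, ?_, f, fun i => (hf i).1, h1, h2⟩
    rw [div_le_iff₀ hdpos]
    have h := (Nat.cast_le (α := ℝ)).mpr hm
    push_cast at h
    linarith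
end

section
/- Let n ≥ 2 be even. Among any three balanced binary words of length n (repetitions allowed), some two of them have a common subsequence of length at least n/2 + 1. -/
/-- If a list starts with `b` and contains at least `m` copies of `!b`, then
`b :: replicate m (!b)` is a sublist. -/
lemma key_sub (l : List Bool) (b : Bool) (m : ℕ) (hh : l.head? = some b)
    (hc : m ≤ l.count (!b)) : (b :: List.replicate m !b).Sublist l := by
  cases l with
  | nil => simp at hh
  | cons a t =>
    simp only [List.head?_cons, Option.some.injEq] at hh
    subst hh
    refine List.Sublist.cons₂ _ ?_
    rw [List.replicate_sublist_iff]
    rwa [List.count_cons, if_neg (by simp), add_zero] at hc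

/-- Let `n ≥ 2` be even.  Among any three balanced binary words of length
`n` (repetitions allowed), some two of them have a common subsequence of length at least
`n/2 + 1`.  (A binary word of even length `n` is balanced if it contains exactly `n/2`
zeros (`false`) and `n/2` ones (`true`).) -/
theorem lcs_three_balanced_binary (n : ℕ) (hn2 : 2 ≤ n) (hn : 2 ∣ n)
    (w : Fin 3 → List Bool)
    (hw : ∀ i, (w i).length = n ∧ (w i).count false = n / 2 ∧ (w i).count true = n / 2) :
    ∃ i j, i ≠ j ∧ ∃ s : List Bool, s.Sublist (w i) ∧ s.Sublist (w j) ∧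
      n / 2 + 1 ≤ s.length := by
  have hne : ∀ i, w i ≠ [] := by
    intro i h
    have := (hw i).1
    rw [h] at this
    simp at this
    omega
  have hhead : ∀ i, (w i).head? = some ((w i).head (hne i)) := by
    intro i; exact List.head?_eq_head _
  have hcount : ∀ i (b : Bool), n / 2 ≤ (w i).count (!b) := by
    intro i b
    cases b <;> simp [(hw i).2.1, (hw i).2.2]
  -- two of the three heads agree
  have main : ∀ i j : Fin 3, i ≠ j → (w i).head (hne i) = (w j).head (hne j) →
      ∃ i j, i ≠ j ∧ ∃ s : List Bool, s.Sublist (w i) ∧ s.Sublist (w j) ∧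
      n / 2 + 1 ≤ s.length := by
    intro i j hij heq
    set b := (w i).head (hne i) with hb
    refine ⟨i, j, hij, b :: List.replicate (n / 2) !b, ?_, ?_, by simp⟩
    · exact key_sub _ _ _ (hhead i) (hcount i b)
    · exact key_sub _ _ _ (by rw [hhead j, heq]) (hcount j b)
  by_cases h01 : (w 0).head (hne 0) = (w 1).head (hne 1)
  · exact main 0 1 (by decide) h01
  by_cases h02 : (w 0).head (hne 0) = (w 2).head (hne 2)
  · exact main 0 2 (by decide) h02
  · refine main 1 2 (by decide) ?_
    revert h01 h02
    cases (w 0).head (hne 0) <;> cases (w 1).head (hne 1) <;>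
      cases (w 2).head (hne 2) <;> simp
end
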